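/- arXiv:2004.12842 — 6 statements merged into one kernel-verified Lean document; each statement's English description precedes it below -/
import Mathlib

section
/- For every a > 0, the function x ↦ exp(−a·Arccos(x)) on [−1,1] has a power series expansion ∑_{n=0}^∞ c_n x^n (convergent on [−1,1]) with all coefficients c_n ≥ 0. -/
open scoped BigOperators

noncomputable def expArccosCoeff (a : ℝ) : ℕ → ℝ
  | 0 => Real.exp (-(a * (Real.pi / 2)))
  | 1 => a * Real.exp (-(a * (Real.pi / 2)))
  | (n + 2) => (((n : ℝ) ^ 2 + a ^ 2) / (((n : ℝ) + 1) * ((n : ℝ) + 2))) * expArccosCoeff a n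

lemma expArccosCoeff_nonneg (a : ℝ) (ha : 0 < a) : ∀ n, 0 ≤ expArccosCoeff a n := by
  intro n
  induction n using Nat.twoStepInduction with
  | zero => exact (Real.exp_pos _).le
  | one => exact mul_nonneg ha.le (Real.exp_pos _).le
  | more n ih _ =>
    rw [expArccosCoeff]
    have h1 : (0:ℝ) ≤ ((n : ℝ) ^ 2 + a ^ 2) / (((n : ℝ) + 1) * ((n : ℝ) + 2)) := by positivity
    exact mul_nonneg h1 ih

lemma expArccosCoeff_rec (a : ℝ) (n : ℕ) :
    ((n : ℝ) + 1) * (((n : ℝ) + 2) * expArccosCoeff a (n + 2)) =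
      ((n : ℝ) ^ 2 + a ^ 2) * expArccosCoeff a n := by
  rw [expArccosCoeff]
  have h1 : ((n : ℝ) + 1) ≠ 0 := by positivity
  have h2 : ((n : ℝ) + 2) ≠ 0 := by positivity
  field_simp

lemma expArccosCoeff_bounded (a : ℝ) (ha : 0 < a) :
    ∃ M : ℝ, 0 < M ∧ ∀ n, expArccosCoeff a n ≤ M := by
  classical
  set N : ℕ := ⌈a ^ 2⌉₊ with hN
  set M : ℝ := (∑ k ∈ Finset.range (N + 2), expArccosCoeff a k) + 1 with hM
  have hnn := expArccosCoeff_nonneg a ha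
  have hMpos : 0 < M := by
    have : (0:ℝ) ≤ ∑ k ∈ Finset.range (N + 2), expArccosCoeff a k :=
      Finset.sum_nonneg fun k _ => hnn k
    linarith
  refine ⟨M, hMpos, ?_⟩
  intro n
  induction n using Nat.strong_induction_on with
  | _ n ih =>
    by_cases hn : n < N + 2
    · have : expArccosCoeff a n ≤ ∑ k ∈ Finset.range (N + 2), expArccosCoeff a k :=
        Finset.single_le_sum (fun k _ => hnn k) (Finset.mem_range.mpr hn)
      linarith
    · push_neg at hn
      obtain ⟨m, rfl⟩ : ∃ m, n = m + 2 := ⟨n - 2, by omega⟩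
      have hmN : N ≤ m := by omega
      have haN : a ^ 2 ≤ (N : ℝ) := Nat.le_ceil _
      have hratio : ((m : ℝ) ^ 2 + a ^ 2) / (((m : ℝ) + 1) * ((m : ℝ) + 2)) ≤ 1 := by
        rw [div_le_one (by positivity)]
        have : (N : ℝ) ≤ (m : ℝ) := by exact_mod_cast hmN
        nlinarith
      have := ih m (by omega)
      calc expArccosCoeff a (m + 2)
          = (((m : ℝ) ^ 2 + a ^ 2) / (((m : ℝ) + 1) * ((m : ℝ) + 2))) * expArccosCoeff a m := by
            rw [expArccosCoeff]
        _ ≤ 1 * expArccosCoeff a m := by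
            apply mul_le_mul_of_nonneg_right hratio (hnn m)
        _ ≤ M := by linarith

lemma hasDerivAt_tsum_pow (c : ℕ → ℝ)
    (hb : ∀ r : ℝ, 0 ≤ r → r < 1 → Summable (fun n : ℕ => ((n : ℝ) + 1) * |c (n + 1)| * r ^ n))
    {x : ℝ} (hx : |x| < 1) :
    HasDerivAt (fun y => ∑' n, c n * y ^ n)
      (∑' n : ℕ, ((n : ℝ) + 1) * c (n + 1) * x ^ n) x := by
  set r : ℝ := (|x| + 1) / 2 with hr
  have hxr : |x| < r := by rw [hr]; linarith
  have hr0 : 0 ≤ r := le_trans (abs_nonneg x) hxr.le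
  have hr1 : r < 1 := by rw [hr]; linarith
  set u : ℕ → ℝ := fun n => (n : ℝ) * |c n| * r ^ (n - 1) with hu
  have hu0 : u 0 = 0 := by simp [hu]
  have hus : Summable u := by
    rw [← summable_nat_add_iff 1]
    refine (hb r hr0 hr1).congr fun n => ?_
    simp only [hu, Nat.add_sub_cancel]
    push_cast
    ring
  have hg : ∀ (n : ℕ) (y : ℝ), y ∈ Metric.ball (0:ℝ) r →
      HasDerivAt (fun z => c n * z ^ n) (c n * ((n : ℝ) * y ^ (n - 1))) y :=
    fun n y _ => (hasDerivAt_pow n y).const_mul (c n)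
  have hbound : ∀ (n : ℕ) (y : ℝ), y ∈ Metric.ball (0:ℝ) r →
      ‖c n * ((n : ℝ) * y ^ (n - 1))‖ ≤ u n := by
    intro n y hy
    have hyr : |y| ≤ r := by
      rw [Metric.mem_ball, Real.dist_eq, sub_zero] at hy; exact hy.le
    have : ‖c n * ((n : ℝ) * y ^ (n - 1))‖ = |c n| * ((n : ℝ) * |y| ^ (n - 1)) := by
      rw [norm_mul, norm_mul, norm_pow]
      simp [Real.norm_eq_abs, abs_of_nonneg (a := (n:ℝ)) (by positivity)]
    rw [this]
    have h1 : |y| ^ (n - 1) ≤ r ^ (n - 1) := pow_le_pow_left₀ (abs_nonneg y) hyr _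
    have h2 : |c n| * ((n : ℝ) * |y| ^ (n - 1)) ≤ |c n| * ((n : ℝ) * r ^ (n - 1)) := by
      apply mul_le_mul_of_nonneg_left _ (abs_nonneg _)
      exact mul_le_mul_of_nonneg_left h1 (Nat.cast_nonneg n)
    calc |c n| * ((n : ℝ) * |y| ^ (n - 1)) ≤ |c n| * ((n : ℝ) * r ^ (n - 1)) := h2
      _ = u n := by rw [hu]; ring
  have h0mem : (0:ℝ) ∈ Metric.ball (0:ℝ) r := by
    simp [Metric.mem_ball, lt_of_le_of_lt (abs_nonneg x) hxr]
  have hg0 : Summable fun n => c n * (0:ℝ) ^ n := by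
    apply summable_of_ne_finset_zero (s := {0})
    intro n hn
    have : n ≠ 0 := by simpa using hn
    simp [zero_pow this]
  have hxmem : x ∈ Metric.ball (0:ℝ) r := by
    simpa [Metric.mem_ball, Real.dist_eq] using hxr
  have main := hasDerivAt_tsum_of_isPreconnected hus Metric.isOpen_ball
    ((convex_ball (0:ℝ) r).isPreconnected) hg hbound h0mem hg0 hxmem
  have hsum' : Summable fun n => c n * ((n : ℝ) * x ^ (n - 1)) := by
    apply Summable.of_norm_bounded hus
    intro n; exact hbound n x hxmem
  have hrw : (∑' n : ℕ, c n * ((n : ℝ) * x ^ (n - 1)))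
      = ∑' n : ℕ, ((n : ℝ) + 1) * c (n + 1) * x ^ n := by
    rw [Summable.tsum_eq_zero_add hsum']
    simp only [Nat.cast_zero, zero_mul, mul_zero, zero_add, Nat.add_sub_cancel,
      Nat.cast_add, Nat.cast_one]
    exact tsum_congr fun n => by ring
  rwa [hrw] at main

lemma summable_quad_geom {r : ℝ} (h0 : 0 ≤ r) (h1 : r < 1) :
    Summable (fun n : ℕ => ((n:ℝ)+1) * (((n:ℝ)+2) * r ^ n)) := by
  have hr : ‖r‖ < 1 := by rwa [Real.norm_eq_abs, abs_of_nonneg h0]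
  have h2 := summable_pow_mul_geometric_of_norm_lt_one (R := ℝ) 2 hr
  have h1' := summable_pow_mul_geometric_of_norm_lt_one (R := ℝ) 1 hr
  have h0' := summable_geometric_of_norm_lt_one hr
  refine ((h2.add (h1'.mul_left 3)).add (h0'.mul_left 2)).congr fun n => ?_
  push_cast
  ring

lemma summable_lin_geom {r : ℝ} (h0 : 0 ≤ r) (h1 : r < 1) :
    Summable (fun n : ℕ => ((n:ℝ)+1) * r ^ n) := by
  have hr : ‖r‖ < 1 := by rwa [Real.norm_eq_abs, abs_of_nonneg h0]
  have h1' := summable_pow_mul_geometric_of_norm_lt_one (R := ℝ) 1 hr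
  have h0' := summable_geometric_of_norm_lt_one hr
  refine (h1'.add h0').congr fun n => ?_
  push_cast
  ring

noncomputable def gFun (a : ℝ) (x : ℝ) : ℝ := ∑' n : ℕ, expArccosCoeff a n * x ^ n

noncomputable def g1Fun (a : ℝ) (x : ℝ) : ℝ :=
  ∑' n : ℕ, ((n : ℝ) + 1) * expArccosCoeff a (n + 1) * x ^ n

noncomputable def g2Fun (a : ℝ) (x : ℝ) : ℝ :=
  ∑' n : ℕ, ((n : ℝ) + 1) * ((((n + 1 : ℕ) : ℝ) + 1) * expArccosCoeff a (n + 1 + 1)) * x ^ n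

lemma gFun_core (a : ℝ) (ha : 0 < a) {x : ℝ} (hx : |x| < 1) :
    HasSum (fun n : ℕ => expArccosCoeff a n * x ^ n) (gFun a x) ∧
    HasSum (fun n : ℕ => ((n:ℝ)+1) * expArccosCoeff a (n+1) * x ^ n) (g1Fun a x) ∧
    HasSum (fun n : ℕ => (((n:ℝ)+1) * ((n:ℝ)+2)) * expArccosCoeff a (n+2) * x ^ n) (g2Fun a x) ∧
    HasDerivAt (gFun a) (g1Fun a x) x ∧ HasDerivAt (g1Fun a) (g2Fun a x) x := by
  obtain ⟨M, hM0, hMb⟩ := expArccosCoeff_bounded a ha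
  have hnn := expArccosCoeff_nonneg a ha
  have habs : ∀ n, |expArccosCoeff a n| ≤ M := fun n => by
    rw [abs_of_nonneg (hnn n)]; exact hMb n
  set b := expArccosCoeff a with hb
  have hb_b : ∀ r : ℝ, 0 ≤ r → r < 1 →
      Summable (fun n : ℕ => ((n : ℝ) + 1) * |b (n + 1)| * r ^ n) := by
    intro r h0 h1
    refine Summable.of_nonneg_of_le (fun n => by positivity)
      (fun n => ?_) ((summable_lin_geom h0 h1).mul_left M)
    have := habs (n + 1)
    have hrn : (0:ℝ) ≤ r ^ n := by positivity
    have hn1 : (0:ℝ) ≤ (n:ℝ) + 1 := by positivity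
    calc ((n : ℝ) + 1) * |b (n + 1)| * r ^ n ≤ ((n : ℝ) + 1) * M * r ^ n := by
          apply mul_le_mul_of_nonneg_right _ hrn
          exact mul_le_mul_of_nonneg_left this hn1
      _ = M * (((n : ℝ) + 1) * r ^ n) := by ring
  have hb_c1 : ∀ r : ℝ, 0 ≤ r → r < 1 →
      Summable (fun n : ℕ => ((n : ℝ) + 1) *
        |(((n + 1 : ℕ) : ℝ) + 1) * b (n + 1 + 1)| * r ^ n) := by
    intro r h0 h1
    refine Summable.of_nonneg_of_le (fun n => by positivity)
      (fun n => ?_) ((summable_quad_geom h0 h1).mul_left M)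
    have h2 := habs (n + 2)
    have hrn : (0:ℝ) ≤ r ^ n := by positivity
    have : |(((n + 1 : ℕ) : ℝ) + 1) * b (n + 1 + 1)| = ((n:ℝ) + 2) * |b (n + 2)| := by
      rw [abs_mul]
      push_cast
      rw [show |(n:ℝ) + 1 + 1| = (n:ℝ) + 2 by
        rw [abs_of_nonneg (by positivity : (0:ℝ) ≤ (n:ℝ) + 1 + 1)]; ring]
    rw [this]
    calc ((n : ℝ) + 1) * (((n:ℝ) + 2) * |b (n + 2)|) * r ^ n
        ≤ ((n : ℝ) + 1) * (((n:ℝ) + 2) * M) * r ^ n := by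
          have : ((n:ℝ) + 2) * |b (n + 2)| ≤ ((n:ℝ) + 2) * M :=
            mul_le_mul_of_nonneg_left h2 (by positivity)
          apply mul_le_mul_of_nonneg_right _ hrn
          exact mul_le_mul_of_nonneg_left this (by positivity)
      _ = M * (((n : ℝ) + 1) * (((n:ℝ) + 2) * r ^ n)) := by ring
  have hxa : 0 ≤ |x| := abs_nonneg x
  have hgeo : Summable (fun n : ℕ => M * |x| ^ n) :=
    (summable_geometric_of_lt_one hxa hx).mul_left M
  have hS0 : HasSum (fun n : ℕ => b n * x ^ n) (gFun a x) := by
    have : Summable (fun n : ℕ => b n * x ^ n) := by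
      refine Summable.of_norm_bounded hgeo fun n => ?_
      rw [norm_mul, norm_pow, Real.norm_eq_abs, Real.norm_eq_abs]
      exact mul_le_mul_of_nonneg_right (habs n) (by positivity)
    exact this.hasSum
  have hS1 : HasSum (fun n : ℕ => ((n:ℝ)+1) * b (n+1) * x ^ n) (g1Fun a x) := by
    have : Summable (fun n : ℕ => ((n:ℝ)+1) * b (n+1) * x ^ n) := by
      refine Summable.of_norm_bounded ((summable_lin_geom hxa hx).mul_left M) fun n => ?_
      rw [norm_mul, norm_mul, norm_pow, Real.norm_eq_abs, Real.norm_eq_abs, Real.norm_eq_abs,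
        abs_of_nonneg (by positivity : (0:ℝ) ≤ (n:ℝ)+1)]
      calc ((n:ℝ)+1) * |b (n+1)| * |x| ^ n ≤ ((n:ℝ)+1) * M * |x| ^ n := by
            apply mul_le_mul_of_nonneg_right _ (by positivity)
            exact mul_le_mul_of_nonneg_left (habs _) (by positivity)
        _ = M * (((n:ℝ)+1) * |x| ^ n) := by ring
    exact this.hasSum
  have hS2sum : Summable (fun n : ℕ => (((n:ℝ)+1) * ((n:ℝ)+2)) * b (n+2) * x ^ n) := by
    refine Summable.of_norm_bounded ((summable_quad_geom hxa hx).mul_left M) fun n => ?_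
    rw [norm_mul, norm_mul, norm_pow, Real.norm_eq_abs, Real.norm_eq_abs, Real.norm_eq_abs,
      abs_of_nonneg (by positivity : (0:ℝ) ≤ ((n:ℝ)+1) * ((n:ℝ)+2))]
    calc ((n:ℝ)+1) * ((n:ℝ)+2) * |b (n+2)| * |x| ^ n
        ≤ ((n:ℝ)+1) * ((n:ℝ)+2) * M * |x| ^ n := by
          apply mul_le_mul_of_nonneg_right _ (by positivity)
          exact mul_le_mul_of_nonneg_left (habs _) (by positivity)
      _ = M * (((n:ℝ)+1) * (((n:ℝ)+2) * |x| ^ n)) := by ring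
  have hS2 : HasSum (fun n : ℕ => (((n:ℝ)+1) * ((n:ℝ)+2)) * b (n+2) * x ^ n) (g2Fun a x) := by
    have h1 := hS2sum.hasSum
    have h2 : (∑' n : ℕ, (((n:ℝ)+1) * ((n:ℝ)+2)) * b (n+2) * x ^ n) = g2Fun a x := by
      rw [g2Fun]
      refine tsum_congr fun n => ?_
      push_cast
      ring
    rwa [h2] at h1
  have hd1 : HasDerivAt (gFun a) (g1Fun a x) x := hasDerivAt_tsum_pow b hb_b hx
  have hd2 : HasDerivAt (g1Fun a) (g2Fun a x) x :=
    hasDerivAt_tsum_pow (fun m : ℕ => ((m : ℝ) + 1) * b (m + 1)) hb_c1 hx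
  exact ⟨hS0, hS1, hS2, hd1, hd2⟩

lemma gFun_ode (a : ℝ) (ha : 0 < a) {x : ℝ} (hx : |x| < 1) :
    (1 - x ^ 2) * g2Fun a x = x * g1Fun a x + a ^ 2 * gFun a x := by
  obtain ⟨hS0, hS1, hS2, -, -⟩ := gFun_core a ha hx
  set b := expArccosCoeff a with hb
  set Bf : ℕ → ℝ := fun n => ((n:ℝ) * ((n:ℝ) - 1)) * b n * x ^ n with hBf
  set Cf : ℕ → ℝ := fun n => (n:ℝ) * b n * x ^ n with hCf
  have hB2 : HasSum (fun n : ℕ => Bf (n + 2)) (g2Fun a x * x ^ 2) := by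
    refine (hS2.mul_right (x ^ 2)).congr_fun fun n => ?_
    simp only [hBf]
    push_cast
    ring
  have hB : HasSum Bf (g2Fun a x * x ^ 2) := by
    have := (hasSum_nat_add_iff (f := Bf) 2).mp hB2
    simpa [hBf, Finset.sum_range_succ] using this
  have hC1 : HasSum (fun n : ℕ => Cf (n + 1)) (g1Fun a x * x) := by
    refine (hS1.mul_right x).congr_fun fun n => ?_
    simp only [hCf]
    push_cast
    ring
  have hC : HasSum Cf (g1Fun a x * x) := by
    have := (hasSum_nat_add_iff (f := Cf) 1).mp hC1
    simpa [hCf, Finset.sum_range_succ] using this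
  have hL : HasSum (fun n : ℕ => (((n:ℝ)+1) * ((n:ℝ)+2)) * b (n+2) * x ^ n - Bf n)
      (g2Fun a x - g2Fun a x * x ^ 2) := hS2.sub hB
  have hR : HasSum (fun n : ℕ => Cf n + a ^ 2 * (b n * x ^ n))
      (g1Fun a x * x + a ^ 2 * gFun a x) := hC.add (hS0.mul_left (a ^ 2))
  have heq : (fun n : ℕ => (((n:ℝ)+1) * ((n:ℝ)+2)) * b (n+2) * x ^ n - Bf n)
      = fun n : ℕ => Cf n + a ^ 2 * (b n * x ^ n) := by
    funext n
    simp only [hBf, hCf]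
    have hrec := expArccosCoeff_rec a n
    rw [← hb] at hrec
    linear_combination x ^ n * hrec
  rw [heq] at hL
  have := hL.unique hR
  linear_combination this

lemma eq_at_zero_of_deriv_zero {v : ℝ → ℝ}
    (hv : ∀ x ∈ Set.Ioo (-1:ℝ) 1, HasDerivAt v 0 x) {x : ℝ}
    (hx : x ∈ Set.Ioo (-1:ℝ) 1) : v x = v 0 := by
  rcases le_or_gt 0 x with h | h
  · have hsub : Set.Icc (0:ℝ) x ⊆ Set.Ioo (-1:ℝ) 1 := fun y hy =>
      ⟨by linarith [hy.1], lt_of_le_of_lt hy.2 hx.2⟩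
    have hcont : ContinuousOn v (Set.Icc 0 x) := fun y hy =>
      (hv y (hsub hy)).continuousAt.continuousWithinAt
    have hderiv : ∀ y ∈ Set.Ico (0:ℝ) x, HasDerivWithinAt v 0 (Set.Ici y) y := fun y hy =>
      (hv y (hsub ⟨hy.1, hy.2.le⟩)).hasDerivWithinAt
    exact constant_of_has_deriv_right_zero hcont hderiv x ⟨h, le_refl x⟩
  · have hsub : Set.Icc x 0 ⊆ Set.Ioo (-1:ℝ) 1 := fun y hy =>
      ⟨lt_of_lt_of_le hx.1 hy.1, by linarith [hy.2]⟩
    have hcont : ContinuousOn v (Set.Icc x 0) := fun y hy =>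
      (hv y (hsub hy)).continuousAt.continuousWithinAt
    have hderiv : ∀ y ∈ Set.Ico x 0, HasDerivWithinAt v 0 (Set.Ici y) y := fun y hy =>
      (hv y (hsub ⟨hy.1, hy.2.le⟩)).hasDerivWithinAt
    exact (constant_of_has_deriv_right_zero hcont hderiv 0 ⟨h.le, le_refl 0⟩).symm

lemma gFun_zero (a : ℝ) : gFun a 0 = expArccosCoeff a 0 := by
  rw [gFun, tsum_eq_single 0 (fun n hn => by simp [zero_pow hn])]
  simp

lemma g1Fun_zero (a : ℝ) : g1Fun a 0 = expArccosCoeff a 1 := by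
  rw [g1Fun, tsum_eq_single 0 (fun n hn => by simp [zero_pow hn])]
  simp

lemma gFun_eq_exp (a : ℝ) (ha : 0 < a) {x : ℝ} (hx : x ∈ Set.Ioo (-1:ℝ) 1) :
    gFun a x = Real.exp (-(a * Real.arccos x)) := by
  have habs : ∀ y ∈ Set.Ioo (-1:ℝ) 1, |y| < 1 := fun y hy => abs_lt.mpr ⟨hy.1, hy.2⟩
  set f : ℝ → ℝ := fun y => Real.exp (-(a * Real.arccos y)) with hf
  set u : ℝ → ℝ := fun y => Real.sqrt (1 - y^2) * g1Fun a y - a * gFun a y with hu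
  -- step 1 : u * f has zero derivative on Ioo
  have hvz : ∀ y ∈ Set.Ioo (-1:ℝ) 1, HasDerivAt (fun z => u z * f z) 0 y := by
    intro y hy
    obtain ⟨-, -, -, hd1, hd2⟩ := gFun_core a ha (habs y hy)
    set s := Real.sqrt (1 - y^2) with hsdef
    have h1y : (0:ℝ) < 1 - y^2 := by nlinarith [hy.1, hy.2]
    have hs : 0 < s := Real.sqrt_pos.mpr h1y
    have hss : s * s = 1 - y^2 := Real.mul_self_sqrt h1y.le
    have hq : HasDerivAt (fun z : ℝ => 1 - z^2) (-(2*y)) y := by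
      simpa using ((hasDerivAt_pow 2 y).const_sub 1)
    have hsq : HasDerivAt (fun z => Real.sqrt (1 - z^2)) (-y/s) y := by
      have := (Real.hasDerivAt_sqrt h1y.ne').comp y hq
      refine this.congr_deriv ?_
      rw [← hsdef]
      field_simp
    have harc : HasDerivAt Real.arccos (-(1 / s)) y :=
      Real.hasDerivAt_arccos hy.1.ne' hy.2.ne
    have hfy : HasDerivAt f ((a/s) * f y) y := by
      have := ((harc.const_mul a).neg).exp
      refine this.congr_deriv ?_
      rw [hf]
      field_simp
      ring
      rfl
    have huy : HasDerivAt u ((-y/s) * g1Fun a y + s * g2Fun a y - a * g1Fun a y) y := by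
      have := (hsq.mul hd2).sub (hd1.const_mul a)
      exact this
    have hode := gFun_ode a ha (habs y hy)
    have hval : ((-y/s) * g1Fun a y + s * g2Fun a y - a * g1Fun a y) * f y
        + u y * ((a/s) * f y) = 0 := by
      rw [hu]
      field_simp
      linear_combination (f y) * hode + (f y) * (g2Fun a y) * hss
    have := huy.mul hfy
    rwa [hval] at this
  -- u vanishes on Ioo
  have hu0 : u 0 = 0 := by
    rw [hu]
    simp only
    rw [gFun_zero, g1Fun_zero]
    rw [show expArccosCoeff a 1 = a * Real.exp (-(a * (Real.pi / 2))) from rfl,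
      show expArccosCoeff a 0 = Real.exp (-(a * (Real.pi / 2))) from rfl]
    norm_num
  have huzero : ∀ y ∈ Set.Ioo (-1:ℝ) 1, Real.sqrt (1 - y^2) * g1Fun a y - a * gFun a y = 0 := by
    intro y hy
    have h1 : u y * f y = u 0 * f 0 := eq_at_zero_of_deriv_zero hvz hy
    rw [hu0, zero_mul] at h1
    have hfpos : 0 < f y := Real.exp_pos _
    have : u y = 0 := by
      rcases mul_eq_zero.mp h1 with h | h
      · exact h
      · exact absurd h hfpos.ne'
    rw [hu] at this
    exact this
  -- gFun · exp(a·arccos) is constant on Ioo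
  have hhz : ∀ y ∈ Set.Ioo (-1:ℝ) 1,
      HasDerivAt (fun z => gFun a z * Real.exp (a * Real.arccos z)) 0 y := by
    intro y hy
    obtain ⟨-, -, -, hd1, -⟩ := gFun_core a ha (habs y hy)
    set s := Real.sqrt (1 - y^2) with hsdef
    have h1y : (0:ℝ) < 1 - y^2 := by nlinarith [hy.1, hy.2]
    have hs : 0 < s := Real.sqrt_pos.mpr h1y
    have harc : HasDerivAt Real.arccos (-(1 / s)) y :=
      Real.hasDerivAt_arccos hy.1.ne' hy.2.ne
    have hE : HasDerivAt (fun z => Real.exp (a * Real.arccos z))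
        (Real.exp (a * Real.arccos y) * (a * -(1 / s))) y := (harc.const_mul a).exp
    have := hd1.mul hE
    have hra := huzero y hy
    rw [← hsdef] at hra
    have hval : g1Fun a y * Real.exp (a * Real.arccos y)
        + gFun a y * (Real.exp (a * Real.arccos y) * (a * -(1 / s))) = 0 := by
      field_simp
      linear_combination Real.exp (a * Real.arccos y) * hra
    rwa [hval] at this
  have hconst : gFun a x * Real.exp (a * Real.arccos x)
      = gFun a 0 * Real.exp (a * Real.arccos 0) := eq_at_zero_of_deriv_zero hhz hx
  rw [gFun_zero, Real.arccos_zero,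
    show expArccosCoeff a 0 = Real.exp (-(a * (Real.pi / 2))) from rfl,
    ← Real.exp_add] at hconst
  norm_num at hconst
  rw [Real.exp_neg]
  exact eq_inv_of_mul_eq_one_left hconst

lemma expArccosCoeff_summable (a : ℝ) (ha : 0 < a) : Summable (expArccosCoeff a) := by
  set b := expArccosCoeff a with hb
  have hnn := expArccosCoeff_nonneg a ha
  have key : ∀ N : ℕ, ∑ n ∈ Finset.range N, b n ≤ 1 := by
    intro N
    have hbound : ∀ t ∈ Set.Ico (0:ℝ) 1, ∑ n ∈ Finset.range N, b n * t ^ n ≤ 1 := by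
      intro t ht
      have hts : |t| < 1 := by rw [abs_of_nonneg ht.1]; exact ht.2
      obtain ⟨hS0, -, -, -, -⟩ := gFun_core a ha hts
      have h1 : ∑ n ∈ Finset.range N, b n * t ^ n ≤ gFun a t :=
        sum_le_hasSum (Finset.range N) (fun n _ => mul_nonneg (hnn n) (pow_nonneg ht.1 n)) hS0
      have h2 : gFun a t = Real.exp (-(a * Real.arccos t)) :=
        gFun_eq_exp a ha ⟨lt_of_lt_of_le neg_one_lt_zero ht.1, ht.2⟩
      have h3 : Real.exp (-(a * Real.arccos t)) ≤ 1 := by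
        rw [Real.exp_le_one_iff]
        have := Real.arccos_nonneg t
        nlinarith
      linarith
    have hcont : Filter.Tendsto (fun t : ℝ => ∑ n ∈ Finset.range N, b n * t ^ n)
        (nhdsWithin 1 (Set.Iio 1)) (nhds (∑ n ∈ Finset.range N, b n * (1:ℝ) ^ n)) := by
      have hc : Continuous (fun t : ℝ => ∑ n ∈ Finset.range N, b n * t ^ n) := by
        continuity
      exact (hc.tendsto 1).mono_left nhdsWithin_le_nhds
    have hev : ∀ᶠ t in nhdsWithin (1:ℝ) (Set.Iio 1),
        (fun t : ℝ => ∑ n ∈ Finset.range N, b n * t ^ n) t ≤ 1 := by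
      filter_upwards [Ico_mem_nhdsLT_of_mem (Set.mem_Ioc.mpr ⟨zero_lt_one, le_refl 1⟩)]
        with t ht
      exact hbound t ht
    have := le_of_tendsto hcont hev
    simpa using this
  exact summable_of_sum_range_le (fun n => hnn n) key

/-- For every `a > 0`, `x ↦ exp(−a·arccos x)` on `[−1,1]` has a power series
expansion `∑ cₙ xⁿ` convergent on `[−1,1]` with all `cₙ ≥ 0`. -/
theorem exp_neg_mul_arccos_nonneg_coeffs (a : ℝ) (ha : 0 < a) :
    ∃ c : ℕ → ℝ, (∀ n, 0 ≤ c n) ∧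
      ∀ x ∈ Set.Icc (-1 : ℝ) 1,
        Summable (fun n : ℕ => c n * x ^ n) ∧
        Real.exp (-(a * Real.arccos x)) = ∑' n : ℕ, c n * x ^ n := by
  refine ⟨expArccosCoeff a, expArccosCoeff_nonneg a ha, ?_⟩
  intro x hx
  set b := expArccosCoeff a with hb
  have hnn := expArccosCoeff_nonneg a ha
  have hxabs : |x| ≤ 1 := abs_le.mpr ⟨hx.1, hx.2⟩
  have hsummable : Summable (fun n : ℕ => b n * x ^ n) := by
    refine Summable.of_norm_bounded (expArccosCoeff_summable a ha) fun n => ?_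
    rw [norm_mul, norm_pow, Real.norm_eq_abs, Real.norm_eq_abs, abs_of_nonneg (hnn n)]
    calc b n * |x| ^ n ≤ b n * 1 := by
          apply mul_le_mul_of_nonneg_left _ (hnn n)
          exact pow_le_one₀ (abs_nonneg x) hxabs
      _ = b n := mul_one _
  refine ⟨hsummable, ?_⟩
  have habel := Real.tendsto_tsum_powerSeries_nhdsWithin_lt
    (f := fun n : ℕ => b n * x ^ n) (hsummable.hasSum.tendsto_sum_nat)
  have hcf : Filter.Tendsto (fun t : ℝ => Real.exp (-(a * Real.arccos (t * x))))
      (nhdsWithin 1 (Set.Iio 1)) (nhds (Real.exp (-(a * Real.arccos x)))) := by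
    have hc : Continuous (fun t : ℝ => Real.exp (-(a * Real.arccos (t * x)))) := by
      exact Real.continuous_exp.comp ((continuous_const.mul
        (Real.continuous_arccos.comp (continuous_id.mul continuous_const))).neg)
    have := (hc.tendsto 1).mono_left (nhdsWithin_le_nhds (s := Set.Iio (1:ℝ)))
    simpa using this
  have heq : ∀ᶠ t in nhdsWithin (1:ℝ) (Set.Iio 1),
      Real.exp (-(a * Real.arccos (t * x))) = ∑' n : ℕ, (b n * x ^ n) * t ^ n := by
    filter_upwards [Ioo_mem_nhdsLT_of_mem (Set.mem_Ioc.mpr ⟨zero_lt_one, le_refl (1:ℝ)⟩)]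
      with t ht
    have htx : |t * x| < 1 := by
      rw [abs_mul]
      calc |t| * |x| ≤ |t| * 1 := mul_le_mul_of_nonneg_left hxabs (abs_nonneg t)
        _ = |t| := mul_one _
        _ < 1 := abs_lt.mpr ⟨by linarith [ht.1], ht.2⟩
    have h1 : gFun a (t * x) = Real.exp (-(a * Real.arccos (t * x))) :=
      gFun_eq_exp a ha (abs_lt.mp htx)
    have h2 : gFun a (t * x) = ∑' n : ℕ, (b n * x ^ n) * t ^ n := by
      rw [gFun]
      exact tsum_congr fun n => by rw [mul_pow]; ring
    rw [← h1, h2]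
  exact tendsto_nhds_unique (hcf.congr' heq) habel
end

section
/- For every a > 0 and x ∈ [−1,1], exp(−a·Arccos(x)) = e^{−aπ/2} · ∑_{n=0}^∞ (r_n(a)/n!)·x^n, where the r_n satisfy the recursion r_0 = 1, r_{n+1}(a) = a·∑_{k=0}^{⌊n/2⌋} binom(n,2k)·r_{n−2k}(a)·((2k−1)!!)², and each r_n(a) > 0 for a > 0. -/
open scoped BigOperators

namespace ExpArccosAux

open Real Finset

/-- odd double factorial (2k-1)!! -/
def dd (k : ℕ) : ℕ := ∏ i ∈ Finset.range k, (2 * i + 1)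

/-- coefficients of (1-x^2)^(-1/2) -/
noncomputable def bb (k : ℕ) : ℝ := (dd k : ℝ) / (2 ^ k * (Nat.factorial k))

lemma dd_succ (k : ℕ) : dd (k+1) = dd k * (2*k+1) := by
  simp [dd, Finset.prod_range_succ]

lemma dd_pos (k : ℕ) : 0 < dd k := Finset.prod_pos (fun i _ => by omega)

lemma dd_mul (k : ℕ) : dd k * (2 ^ k * Nat.factorial k) = Nat.factorial (2 * k) := by
  induction k with
  | zero => simp [dd]
  | succ k ih =>
      have h2 : 2 * (k+1) = 2*k+1+1 := by ring
      rw [dd_succ, h2, Nat.factorial_succ (2*k+1), Nat.factorial_succ (2*k), ← ih, pow_succ, Nat.factorial_succ k]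
      ring

lemma bb_pos (k : ℕ) : 0 < bb k := by
  apply div_pos (by exact_mod_cast dd_pos k)
  positivity

lemma bb_le_one (k : ℕ) : bb k ≤ 1 := by
  rw [bb, div_le_one (by positivity)]
  have : dd k ≤ 2 ^ k * Nat.factorial k := by
    induction k with
    | zero => simp [dd]
    | succ k ih =>
        rw [dd_succ, pow_succ, Nat.factorial_succ]
        calc dd k * (2*k+1) ≤ (2^k * Nat.factorial k) * (2*(k+1)) :=
              Nat.mul_le_mul ih (by omega)
          _ = 2 ^ k * 2 * ((k+1) * Nat.factorial k) := by ring
  exact_mod_cast this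

lemma bb_eq (k : ℕ) : bb k = (dd k : ℝ)^2 / (Nat.factorial (2*k)) := by
  rw [bb, ← dd_mul k]
  have h1 : (dd k : ℝ) ≠ 0 := by exact_mod_cast (dd_pos k).ne'
  have h2 : (2:ℝ) ^ k * (Nat.factorial k : ℝ) ≠ 0 := by positivity
  push_cast
  field_simp

lemma bb_rec (k : ℕ) : (2*(k:ℝ)+2) * bb (k+1) = (2*k+1) * bb k := by
  rw [bb, bb, dd_succ]
  push_cast
  rw [pow_succ, Nat.factorial_succ]
  push_cast
  field_simp

lemma bb_zero : bb 0 = 1 := by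
  simp [bb, dd]

lemma summable_aux (K : ℕ) {q : ℝ} (hq0 : 0 ≤ q) (hq : q < 1) :
    Summable (fun n : ℕ => ((n : ℝ) + 1) ^ K * q ^ n) := by
  have hnorm : ‖q‖ < 1 := by rwa [Real.norm_eq_abs, abs_of_nonneg hq0]
  have h : ∀ j : ℕ, Summable (fun n : ℕ => ((K.choose j : ℝ)) * ((n : ℝ) ^ j * q ^ n)) :=
    fun j => (summable_pow_mul_geometric_of_norm_lt_one j hnorm).mul_left _
  have hs : Summable (fun n : ℕ => ∑ j ∈ Finset.range (K + 1),
      ((K.choose j : ℝ)) * ((n : ℝ) ^ j * q ^ n)) := summable_sum (fun j _ => h j)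
  refine hs.congr fun n => ?_
  rw [add_pow, Finset.sum_mul]
  apply Finset.sum_congr rfl
  intro j _
  simp only [one_pow]
  ring

lemma eq_of_deriv_zero {f : ℝ → ℝ} (hf : ∀ x ∈ Set.Ioo (-1:ℝ) 1, HasDerivAt f 0 x)
    {x : ℝ} (hx : x ∈ Set.Ioo (-1:ℝ) 1) : f x = f 0 := by
  obtain ⟨hx1, hx2⟩ := hx
  have hsub : ∀ a b : ℝ, -1 < a → b < 1 → Set.Icc a b ⊆ Set.Ioo (-1:ℝ) 1 := by
    intro a b ha hb y hy
    exact ⟨lt_of_lt_of_le ha hy.1, lt_of_le_of_lt hy.2 hb⟩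
  rcases le_or_gt 0 x with h | h
  · have hs := hsub 0 x (by norm_num) hx2
    have := constant_of_has_deriv_right_zero (f := f) (a := 0) (b := x)
      (fun y hy => ((hf y (hs hy)).continuousAt).continuousWithinAt)
      (fun y hy => ((hf y (hs ⟨hy.1, le_of_lt hy.2⟩)).hasDerivWithinAt))
    exact this x (Set.mem_Icc.2 ⟨h, le_refl x⟩)
  · have hs := hsub x 0 hx1 (by norm_num)
    have := constant_of_has_deriv_right_zero (f := f) (a := x) (b := 0)
      (fun y hy => ((hf y (hs hy)).continuousAt).continuousWithinAt)
      (fun y hy => ((hf y (hs ⟨hy.1, le_of_lt hy.2⟩)).hasDerivWithinAt))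
    exact (this 0 (Set.mem_Icc.2 ⟨le_of_lt h, le_refl 0⟩)).symm

lemma summable_pow_of_bound {c : ℕ → ℝ} {M : ℝ} {K : ℕ}
    (hb : ∀ n, |c n| ≤ M * ((n : ℝ) + 1) ^ K) {x : ℝ} (hx : |x| < 1) :
    Summable (fun n => c n * x ^ n) := by
  refine Summable.of_norm_bounded (((summable_aux K (abs_nonneg x) hx).mul_left M)) fun n => ?_
  rw [Real.norm_eq_abs, abs_mul, abs_pow]
  calc |c n| * |x| ^ n ≤ (M * ((n : ℝ) + 1) ^ K) * |x| ^ n := by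
        apply mul_le_mul_of_nonneg_right (hb n) (by positivity)
    _ = M * (((n : ℝ) + 1) ^ K * |x| ^ n) := by ring

lemma summable_shift {c : ℕ → ℝ} {M : ℝ} {K : ℕ}
    (hb : ∀ n, |c n| ≤ M * ((n : ℝ) + 1) ^ K) {x : ℝ} (hx : |x| < 1) :
    Summable (fun n : ℕ => ((n : ℝ) + 1) * c (n + 1) * x ^ n) := by
  have hM : 0 ≤ M := le_trans (abs_nonneg (c 0)) (by simpa using hb 0)
  refine Summable.of_norm_bounded
    (((summable_aux (K+1) (abs_nonneg x) hx).mul_left (M * 2 ^ (K+1)))) fun n => ?_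
  rw [Real.norm_eq_abs, abs_mul, abs_mul, abs_pow]
  have h1 : |((n : ℝ) + 1)| = (n : ℝ) + 1 := abs_of_nonneg (by positivity)
  rw [h1]
  have h2 : ((n : ℝ) + 1) * |c (n + 1)| ≤ M * ((n : ℝ) + 2) ^ (K + 1) := by
    have := hb (n + 1)
    push_cast at this
    calc ((n : ℝ) + 1) * |c (n + 1)| ≤ ((n : ℝ) + 2) * (M * ((n : ℝ) + 1 + 1) ^ K) := by
          apply mul_le_mul (by linarith) this (abs_nonneg _) (by positivity)
      _ = M * ((n : ℝ) + 2) ^ (K + 1) := by ring_nf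
  calc ((n : ℝ) + 1) * |c (n + 1)| * |x| ^ n ≤ (M * ((n : ℝ) + 2) ^ (K + 1)) * |x| ^ n :=
        mul_le_mul_of_nonneg_right h2 (by positivity)
    _ ≤ (M * (2 * ((n : ℝ) + 1)) ^ (K + 1)) * |x| ^ n := by
        apply mul_le_mul_of_nonneg_right _ (by positivity)
        apply mul_le_mul_of_nonneg_left _ hM
        apply pow_le_pow_left₀ (by positivity) (by linarith)
    _ = M * 2 ^ (K + 1) * (((n : ℝ) + 1) ^ (K + 1) * |x| ^ n) := by
        rw [mul_pow]
        ring

lemma hasDerivAt_tsum_pow {c : ℕ → ℝ} {M : ℝ} {K : ℕ}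
    (hb : ∀ n, |c n| ≤ M * ((n : ℝ) + 1) ^ K) {x : ℝ} (hx : |x| < 1) :
    HasDerivAt (fun y => ∑' n, c n * y ^ n)
      (∑' n : ℕ, ((n : ℝ) + 1) * c (n + 1) * x ^ n) x := by
  have hM : 0 ≤ M := le_trans (abs_nonneg (c 0)) (by simpa using hb 0)
  set ρ : ℝ := (1 + |x|) / 2 with hρ
  have hρ0 : 0 < ρ := by positivity
  have hxρ : |x| < ρ := by rw [hρ]; linarith
  have hρ1 : ρ < 1 := by rw [hρ]; linarith
  have key : HasDerivAt (fun y => ∑' n, c n * y ^ n)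
      (∑' n, c n * ((n : ℝ) * x ^ (n - 1))) x := by
    apply hasDerivAt_tsum_of_isPreconnected
      (u := fun n : ℕ => (M / ρ) * (((n : ℝ) + 1) ^ (K + 1) * ρ ^ n))
      (((summable_aux (K+1) hρ0.le hρ1).mul_left (M / ρ)))
      Metric.isOpen_ball ((convex_ball (0:ℝ) ρ).isPreconnected)
      (fun n y _ => (hasDerivAt_pow n y).const_mul (c n))
      ?_ (Metric.mem_ball_self hρ0) ?_ ?_
    · intro n y hy
      have hyρ : |y| < ρ := by rwa [Metric.mem_ball, Real.dist_eq, sub_zero] at hy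
      rw [Real.norm_eq_abs, abs_mul, abs_mul, abs_pow]
      have hyn : |y| ^ (n - 1) ≤ ρ ^ (n - 1) := pow_le_pow_left₀ (abs_nonneg y) hyρ.le _
      have habs : |((n:ℝ))| = (n:ℝ) := abs_of_nonneg (by positivity)
      rw [habs]
      rcases Nat.eq_zero_or_pos n with rfl | hn
      · simp; positivity
      · have hn1 : n - 1 + 1 = n := Nat.succ_pred_eq_of_pos hn
        calc |c n| * ((n:ℝ) * |y| ^ (n-1))
            ≤ (M * ((n : ℝ) + 1) ^ K) * (((n:ℝ)+1) * ρ ^ (n-1)) := by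
              apply mul_le_mul (hb n) _ (by positivity) (by positivity)
              apply mul_le_mul (by linarith) hyn (by positivity) (by positivity)
          _ = (M / ρ) * (((n : ℝ) + 1) ^ (K+1) * (ρ ^ (n-1) * ρ)) := by
              field_simp
              ring
          _ = (M / ρ) * (((n : ℝ) + 1) ^ (K + 1) * ρ ^ n) := by
              rw [← pow_succ, hn1]
    · exact (summable_of_ne_finset_zero (s := {0}) (fun n hn => by
        simp only [Finset.mem_singleton] at hn
        simp [zero_pow hn]))
    · rwa [Metric.mem_ball, Real.dist_eq, sub_zero]
  -- now shift the index in the tsum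
  have hsum1 : Summable (fun n : ℕ => ((n : ℝ) + 1) * c (n + 1) * x ^ n) := summable_shift hb hx
  have hsum0 : Summable (fun n => c n * ((n : ℝ) * x ^ (n - 1))) := by
    rw [← summable_nat_add_iff 1]
    refine hsum1.congr fun n => ?_
    push_cast [Nat.add_sub_cancel]
    ring
  convert key using 1
  rw [Summable.tsum_eq_zero_add hsum0]
  have hcg : ∀ b : ℕ, c (b+1) * ((((b+1) : ℕ) : ℝ) * x ^ (b + 1 - 1)) =
      ((b:ℝ)+1) * c (b+1) * x ^ b :=
    fun b => by push_cast [Nat.add_sub_cancel]; ring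
  rw [tsum_congr hcg]
  simp

-- placeholders from previous chunks
noncomputable def Bf (x : ℝ) : ℝ := ∑' k : ℕ, bb k * x ^ (2 * k)

noncomputable def bet (j : ℕ) : ℝ := if Even j then bb (j / 2) else 0

lemma bet_abs (j : ℕ) : |bet j| ≤ 1 * ((j : ℝ) + 1) ^ (0 : ℕ) := by
  simp only [pow_zero, mul_one, bet]
  split
  · rw [abs_of_pos (bb_pos _)]; exact bb_le_one _
  · simp

lemma bet_two (k : ℕ) : bet (2 * k) = bb k := by
  simp [bet, Nat.mul_div_cancel_left k (by norm_num : 0 < 2), even_two_mul]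

lemma Bf_eq (x : ℝ) : Bf x = ∑' j : ℕ, bet j * x ^ j := by
  rw [Bf]
  have hinj : Function.Injective (fun k : ℕ => 2 * k) := fun a b h => by dsimp only at h; omega
  have hsupp : Function.support (fun j : ℕ => bet j * x ^ j) ⊆
      Set.range (fun k : ℕ => 2 * k) := by
    intro j hj
    simp only [Function.mem_support] at hj
    have : Even j := by
      by_contra h
      simp [bet, h] at hj
    obtain ⟨m, hm⟩ := this
    exact ⟨m, by dsimp only; omega⟩
  have := hinj.tsum_eq hsupp
  rw [← this]
  exact tsum_congr fun k => by rw [bet_two]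

/-- summability helper for the odd-index series -/
lemma summable_odd {x : ℝ} (hx : |x| < 1) (g : ℕ → ℝ) (C : ℝ)
    (hg : ∀ k, |g k| ≤ C * (((k : ℝ) + 1) * (x ^ 2) ^ k)) : Summable g := by
  have hx2 : x ^ 2 < 1 := by
    have := abs_nonneg x
    nlinarith [sq_abs x]
  refine Summable.of_norm_bounded (((summable_aux 1 (sq_nonneg x) hx2).mul_left C)) fun k => ?_
  simpa [pow_one] using hg k

lemma T1_summable {x : ℝ} (hx : |x| < 1) :
    Summable (fun k : ℕ => (2*(k:ℝ)+1) * bb k * x ^ (2*k+1)) := by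
  apply summable_odd hx _ 2
  intro k
  rw [abs_mul, abs_mul, abs_pow, abs_of_pos (bb_pos k), abs_of_nonneg (by positivity :
    (0:ℝ) ≤ 2*(k:ℝ)+1)]
  have h1 : |x| ^ (2*k+1) ≤ (x^2)^k := by
    rw [pow_succ, pow_mul, sq_abs]
    have h2 : (x^2)^k * |x| ≤ (x^2)^k * 1 :=
      mul_le_mul_of_nonneg_left hx.le (by positivity)
    simpa using h2
  calc (2*(k:ℝ)+1) * bb k * |x| ^ (2*k+1) ≤ (2*(k:ℝ)+2) * 1 * (x^2)^k := by
        apply mul_le_mul (mul_le_mul (by linarith) (bb_le_one k) (bb_pos k).le (by positivity))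
          h1 (by positivity) (by positivity)
    _ = 2 * (((k:ℝ)+1) * (x^2)^k) := by ring

lemma xBf_summable {x : ℝ} (hx : |x| < 1) :
    Summable (fun k : ℕ => bb k * x ^ (2*k+1)) := by
  apply summable_odd hx _ 1
  intro k
  rw [abs_mul, abs_pow, abs_of_pos (bb_pos k)]
  have h1 : |x| ^ (2*k+1) ≤ (x^2)^k := by
    rw [pow_succ, pow_mul, sq_abs]
    have h2 : (x^2)^k * |x| ≤ (x^2)^k * 1 :=
      mul_le_mul_of_nonneg_left hx.le (by positivity)
    simpa using h2
  calc bb k * |x| ^ (2*k+1) ≤ 1 * (x^2)^k :=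
        mul_le_mul (bb_le_one k) h1 (by positivity) (by norm_num)
    _ ≤ 1 * (((k:ℝ)+1) * (x^2)^k) := by
        rw [one_mul, one_mul]
        have : (1:ℝ) ≤ (k:ℝ)+1 := by
          have := Nat.cast_nonneg (α := ℝ) k
          linarith
        nlinarith [pow_nonneg (sq_nonneg x) k]

lemma Bf_summable {x : ℝ} (hx : |x| < 1) :
    Summable (fun k : ℕ => bb k * x ^ (2*k)) := by
  apply summable_odd hx _ 1
  intro k
  rw [abs_mul, abs_pow, abs_of_pos (bb_pos k)]
  have h1 : |x| ^ (2*k) = (x^2)^k := by rw [pow_mul, sq_abs]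
  rw [h1]
  calc bb k * (x^2)^k ≤ 1 * (x^2)^k :=
        mul_le_mul_of_nonneg_right (bb_le_one k) (by positivity)
    _ ≤ 1 * (((k:ℝ)+1) * (x^2)^k) := by
        rw [one_mul, one_mul]
        nlinarith [pow_nonneg (sq_nonneg x) k, Nat.cast_nonneg (α := ℝ) k]

lemma Bf_hasDeriv {x : ℝ} (hx : |x| < 1) :
    HasDerivAt Bf (∑' k : ℕ, (2*(k:ℝ)+1) * bb k * x ^ (2*k+1)) x := by
  have h := hasDerivAt_tsum_pow bet_abs hx
  have hfun : (fun y => ∑' j : ℕ, bet j * y ^ j) = Bf := by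
    funext y; rw [Bf_eq]
  rw [hfun] at h
  convert h using 1
  -- identify the derivative series
  have hinj : Function.Injective (fun k : ℕ => 2 * k + 1) := fun a b h => by dsimp only at h; omega
  have hsupp : Function.support (fun j : ℕ => ((j:ℝ)+1) * bet (j+1) * x ^ j) ⊆
      Set.range (fun k : ℕ => 2 * k + 1) := by
    intro j hj
    simp only [Function.mem_support] at hj
    have hev : Even (j+1) := by
      by_contra h
      simp [bet, h] at hj
    obtain ⟨m, hm⟩ := hev
    exact ⟨m - 1, by dsimp only; omega⟩
  have heq := hinj.tsum_eq (f := fun j : ℕ => ((j:ℝ)+1) * bet (j+1) * x ^ j) hsupp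
  rw [← heq]
  apply tsum_congr
  intro k
  have h1 : (2*k+1) + 1 = 2*(k+1) := by ring
  simp only [h1, bet_two]
  have h2 : ((2*k+1 : ℕ) : ℝ) + 1 = 2*(k:ℝ)+2 := by push_cast; ring
  rw [h2, ← bb_rec]

lemma Bf_deriv_identity {x : ℝ} (hx : |x| < 1) :
    (1 - x^2) * (∑' k : ℕ, (2*(k:ℝ)+1) * bb k * x ^ (2*k+1)) = x * Bf x := by
  set T1 := ∑' k : ℕ, (2*(k:ℝ)+1) * bb k * x ^ (2*k+1) with hT1
  have hsT1 := T1_summable hx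
  have hsxB := xBf_summable hx
  -- T1 - x * Bf x = ∑' 2k bb k x^(2k+1)
  have h1 : T1 - x * Bf x = ∑' k : ℕ, 2*(k:ℝ) * bb k * x ^ (2*k+1) := by
    rw [hT1, Bf, ← tsum_mul_left]
    rw [← Summable.tsum_sub hsT1 ((Bf_summable hx).mul_left x)]
    apply tsum_congr
    intro k
    rw [pow_succ]
    ring
  -- shift : ∑' 2k bb k x^(2k+1) = ∑' (2k+2) bb (k+1) x^(2k+3)
  have hs2 : Summable (fun k : ℕ => 2*(k:ℝ) * bb k * x ^ (2*k+1)) := by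
    have := hsT1.sub (by simpa using hsxB)
    refine this.congr fun k => ?_
    ring
  have h2 : (∑' k : ℕ, 2*(k:ℝ) * bb k * x ^ (2*k+1)) =
      ∑' k : ℕ, (2*(k:ℝ)+2) * bb (k+1) * x ^ (2*k+3) := by
    rw [Summable.tsum_eq_zero_add hs2]
    simp only [Nat.cast_zero, mul_zero, zero_mul, zero_add]
    apply tsum_congr
    intro k
    push_cast
    ring_nf
  -- bb_rec : (2k+2) bb(k+1) = (2k+1) bb k
  have h3 : (∑' k : ℕ, (2*(k:ℝ)+2) * bb (k+1) * x ^ (2*k+3)) =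
      ∑' k : ℕ, (2*(k:ℝ)+1) * bb k * x ^ (2*k+3) := by
    apply tsum_congr
    intro k
    rw [bb_rec]
  -- = x^2 * T1
  have h4 : (∑' k : ℕ, (2*(k:ℝ)+1) * bb k * x ^ (2*k+3)) = x^2 * T1 := by
    rw [hT1, ← tsum_mul_left]
    apply tsum_congr
    intro k
    have : x ^ (2*k+3) = x^2 * x ^ (2*k+1) := by
      rw [← pow_add]
      congr 1
      omega
    rw [this]
    ring
  have := h1.trans (h2.trans (h3.trans h4))
  nlinarith [this]

lemma Bf_zero : Bf 0 = 1 := by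
  rw [Bf]
  rw [tsum_eq_single 0 (fun k hk => by
    have : 2 * k ≠ 0 := by omega
    simp [zero_pow this])]
  simp [bb_zero]

lemma Bf_mul_sqrt {x : ℝ} (hx : x ∈ Set.Ioo (-1:ℝ) 1) :
    Bf x * Real.sqrt (1 - x^2) = 1 := by
  have key : ∀ y ∈ Set.Ioo (-1:ℝ) 1,
      HasDerivAt (fun z => Bf z * Real.sqrt (1 - z^2)) 0 y := by
    intro y hy
    have hy1 : |y| < 1 := abs_lt.2 ⟨hy.1, hy.2⟩
    have hypos : 0 < 1 - y^2 := by nlinarith [sq_abs y, abs_nonneg y]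
    have hsq : Real.sqrt (1 - y^2) > 0 := Real.sqrt_pos.2 hypos
    have hBd := Bf_hasDeriv hy1
    have hgd : HasDerivAt (fun z : ℝ => 1 - z^2) (-(2*y)) y := by
      have := (hasDerivAt_pow 2 y).const_sub 1
      convert this using 1
      · rfl
      · rfl
      simp [pow_one]
    have hsd : HasDerivAt (fun z => Real.sqrt (1 - z^2)) (-(2*y) / (2 * Real.sqrt (1 - y^2))) y :=
      hgd.sqrt hypos.ne'
    have := hBd.mul hsd
    convert this using 1
    · rfl
    · rfl
    · rfl
    have hT := Bf_deriv_identity hy1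
    set T1 := ∑' k : ℕ, (2*(k:ℝ)+1) * bb k * y ^ (2*k+1)
    set s := Real.sqrt (1 - y^2)
    have hs2 : s^2 = 1 - y^2 := Real.sq_sqrt hypos.le
    -- 0 = T1 * s + Bf y * (-(2y)/(2s))
    have hT1s : T1 * s = y * Bf y / s := by
      have : T1 * s * s = y * Bf y := by
        rw [mul_assoc, ← sq, hs2]
        linarith [hT]
      field_simp at this ⊢
      linarith [this]
    rw [hT1s]
    field_simp
    ring
  have := eq_of_deriv_zero key hx
  rw [this]
  simp [Bf_zero]

lemma bet_def (j : ℕ) : bet j = if Even j then bb (j / 2) else 0 := rfl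

lemma main (a : ℝ) (ha : 0 < a) (c : ℕ → ℝ) (hpos : ∀ n, 0 < c n) (hc0 : c 0 = 1)
    (hkey : ∀ n : ℕ, ((n:ℝ)+1) * c (n+1) =
      a * ∑ k ∈ Finset.range (n/2+1), c (n - 2*k) * bb k) :
    ∀ x ∈ Set.Icc (-1:ℝ) 1, Real.exp (a * Real.arcsin x) = ∑' n : ℕ, c n * x ^ n := by
  classical
  set K : ℕ := ⌈a⌉₊ with hK
  have haK : a ≤ (K : ℝ) := Nat.le_ceil a
  -- step 1 : c (n+1) ≤ a/(n+1) * partial sum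
  have hcS : ∀ n : ℕ, c (n+1) ≤ a / ((n:ℝ)+1) * (∑ m ∈ Finset.range (n+1), c m) := by
    intro n
    have h1 : (∑ k ∈ Finset.range (n/2+1), c (n - 2*k) * bb k) ≤
        ∑ k ∈ Finset.range (n/2+1), c (n - 2*k) := by
      apply Finset.sum_le_sum
      intro k _
      calc c (n - 2*k) * bb k ≤ c (n - 2*k) * 1 :=
            mul_le_mul_of_nonneg_left (bb_le_one k) (hpos _).le
        _ = c (n - 2*k) := mul_one _
    have h2 : (∑ k ∈ Finset.range (n/2+1), c (n - 2*k)) ≤ ∑ m ∈ Finset.range (n+1), c m := by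
      have himg : (∑ k ∈ Finset.range (n/2+1), c (n - 2*k)) =
          ∑ m ∈ (Finset.range (n/2+1)).image (fun k => n - 2*k), c m := by
        rw [Finset.sum_image]
        intro k1 hk1 k2 hk2 he
        simp only [Finset.mem_coe, Finset.mem_range] at hk1 hk2 he
        omega
      rw [himg]
      apply Finset.sum_le_sum_of_subset_of_nonneg
      · intro m hm
        simp only [Finset.mem_image, Finset.mem_range] at hm ⊢
        obtain ⟨k, hk, rfl⟩ := hm
        omega
      · exact fun m _ _ => (hpos m).le
    have h3 := hkey n
    have hn1 : (0:ℝ) < (n:ℝ)+1 := by positivity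
    rw [div_mul_eq_mul_div, le_div_iff₀ hn1]
    calc c (n+1) * ((n:ℝ)+1) = ((n:ℝ)+1) * c (n+1) := by ring
      _ = a * ∑ k ∈ Finset.range (n/2+1), c (n - 2*k) * bb k := h3
      _ ≤ a * ∑ m ∈ Finset.range (n+1), c m :=
          mul_le_mul_of_nonneg_left (h1.trans h2) ha.le
  -- step 2 : partial sums bounded polynomially
  have hSbound : ∀ n : ℕ, (∑ m ∈ Finset.range (n+1), c m) ≤ Real.exp a * ((n:ℝ)+1)^K := by
    intro n
    induction n with
    | zero =>
        rw [Finset.sum_range_one, hc0]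
        rw [Nat.cast_zero, zero_add, one_pow, mul_one]
        exact Real.one_le_exp ha.le
    | succ n ih =>
        rw [Finset.sum_range_succ]
        set S := ∑ m ∈ Finset.range (n+1), c m with hS
        have hS0 : (0:ℝ) ≤ S := Finset.sum_nonneg fun m _ => (hpos m).le
        have hn1 : (0:ℝ) < (n:ℝ)+1 := by positivity
        have hfrac : 1 + a/((n:ℝ)+1) ≤ (1 + 1/((n:ℝ)+1))^K := by
          have h1 : a/((n:ℝ)+1) ≤ (K:ℝ)/((n:ℝ)+1) := by gcongr
          have h2 : 1 + (K:ℝ) * (1/((n:ℝ)+1)) ≤ (1 + 1/((n:ℝ)+1))^K :=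
            one_add_mul_le_pow (by
              have : (0:ℝ) ≤ 1/((n:ℝ)+1) := by positivity
              linarith) K
          rw [mul_one_div] at h2
          linarith
        calc S + c (n+1) ≤ S + a/((n:ℝ)+1) * S := by linarith [hcS n]
          _ = (1 + a/((n:ℝ)+1)) * S := by ring
          _ ≤ (1 + 1/((n:ℝ)+1))^K * (Real.exp a * ((n:ℝ)+1)^K) :=
              mul_le_mul hfrac ih hS0 (by positivity)
          _ = Real.exp a * (((n:ℝ)+1) * (1 + 1/((n:ℝ)+1)))^K := by
              rw [mul_pow]; ring
          _ = Real.exp a * (((n+1:ℕ):ℝ)+1)^K := by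
              congr 2
              push_cast
              field_simp
  -- step 3 : coefficient bound
  have habs : ∀ n : ℕ, |c n| ≤ Real.exp a * ((n:ℝ)+1)^K := by
    intro n
    rw [abs_of_pos (hpos n)]
    calc c n ≤ ∑ m ∈ Finset.range (n+1), c m := by
          apply Finset.single_le_sum (fun m _ => (hpos m).le)
          simp
      _ ≤ Real.exp a * ((n:ℝ)+1)^K := hSbound n
  -- F and its derivative
  set F : ℝ → ℝ := fun y => ∑' n : ℕ, c n * y ^ n with hF
  have hF0 : F 0 = 1 := by
    rw [hF]
    simp only
    rw [tsum_eq_single 0 (fun n hn => by simp [zero_pow hn])]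
    simp [hc0]
  -- Cauchy product step
  have hcauchy : ∀ x : ℝ, |x| < 1 →
      F x * Bf x = ∑' n : ℕ, (∑ k ∈ Finset.range (n/2+1), c (n - 2*k) * bb k) * x ^ n := by
    intro x hx
    rw [hF, Bf_eq]
    simp only
    have hsf : Summable (fun n : ℕ => ‖c n * x ^ n‖) := by
      have := summable_pow_of_bound habs hx
      exact this.abs.congr (fun n => (Real.norm_eq_abs _).symm)
    have hsg : Summable (fun j : ℕ => ‖bet j * x ^ j‖) := by
      have := summable_pow_of_bound bet_abs hx
      exact this.abs.congr (fun n => (Real.norm_eq_abs _).symm)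
    rw [tsum_mul_tsum_eq_tsum_sum_antidiagonal_of_summable_norm hsf hsg]
    apply tsum_congr
    intro n
    rw [Finset.Nat.sum_antidiagonal_eq_sum_range_succ
      (fun i j => (c i * x ^ i) * (bet j * x ^ j))]
    rw [← Finset.sum_range_reflect]
    have hre : ∀ j ∈ Finset.range (n+1),
        (c (n + 1 - 1 - j) * x ^ (n + 1 - 1 - j)) *
          (bet (n - (n + 1 - 1 - j)) * x ^ (n - (n + 1 - 1 - j))) =
        (c (n - j) * x ^ (n - j)) * (bet j * x ^ j) := by
      intro j hj
      simp only [Finset.mem_range] at hj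
      have e1 : n + 1 - 1 - j = n - j := by omega
      have e2 : n - (n - j) = j := by omega
      rw [e1, e2]
    rw [Finset.sum_congr rfl hre]
    -- now identify with the even sum
    have hsub : (Finset.range (n/2+1)).image (fun k => 2*k) ⊆ Finset.range (n+1) := by
      intro j hj
      simp only [Finset.mem_image, Finset.mem_range] at hj ⊢
      obtain ⟨k, hk, rfl⟩ := hj
      omega
    have hzero : ∀ j ∈ Finset.range (n+1), j ∉ (Finset.range (n/2+1)).image (fun k => 2*k) →
        (c (n - j) * x ^ (n - j)) * (bet j * x ^ j) = 0 := by
      intro j hj hjn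
      simp only [Finset.mem_range] at hj
      have hodd : ¬ Even j := by
        intro hev
        obtain ⟨m, hm⟩ := hev
        apply hjn
        simp only [Finset.mem_image, Finset.mem_range]
        exact ⟨m, by omega, by omega⟩
      rw [bet_def, if_neg hodd]
      ring
    rw [← Finset.sum_subset hsub hzero]
    rw [Finset.sum_image (by intro k1 hk1 k2 hk2 h; simp only at h; omega)]
    rw [Finset.sum_mul]
    apply Finset.sum_congr rfl
    intro k hk
    simp only [Finset.mem_range] at hk
    rw [bet_two]
    have h2k : 2*k ≤ n := by omega
    have : x ^ (n - 2*k) * x ^ (2*k) = x ^ n := by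
      rw [← pow_add]
      congr 1
      omega
    calc (c (n - 2*k) * x ^ (n - 2*k)) * (bb k * x ^ (2*k))
        = c (n - 2*k) * bb k * (x ^ (n - 2*k) * x ^ (2*k)) := by ring
      _ = c (n - 2*k) * bb k * x ^ n := by rw [this]
  -- derivative of F
  have hderiv : ∀ x : ℝ, |x| < 1 → HasDerivAt F (a * (F x * Bf x)) x := by
    intro x hx
    have h := hasDerivAt_tsum_pow habs hx
    rw [hF]
    convert h using 1
    rw [hcauchy x hx, ← tsum_mul_left]
    apply tsum_congr
    intro n
    rw [hkey n]
    ring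
  -- F equals exp (a arcsin) on the open interval
  have hIoo : ∀ x ∈ Set.Ioo (-1:ℝ) 1, F x = Real.exp (a * Real.arcsin x) := by
    have hd : ∀ y ∈ Set.Ioo (-1:ℝ) 1,
        HasDerivAt (fun z => F z * Real.exp (-(a * Real.arcsin z))) 0 y := by
      intro y hy
      have hy1 : |y| < 1 := abs_lt.2 ⟨hy.1, hy.2⟩
      have hypos : 0 < 1 - y^2 := by nlinarith [sq_abs y, abs_nonneg y]
      set s := Real.sqrt (1 - y^2) with hs
      have hs0 : 0 < s := Real.sqrt_pos.2 hypos
      have hBfy : Bf y = 1/s := by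
        have := Bf_mul_sqrt (x := y) ⟨hy.1, hy.2⟩
        field_simp
        linarith [this]
      have hFd := hderiv y hy1
      have harc := Real.hasDerivAt_arcsin (ne_of_gt hy.1) (ne_of_lt hy.2)
      have hlin : HasDerivAt (fun z => -(a * Real.arcsin z)) (-a * (1/s)) y := by
        have h2 := harc.const_mul (-a)
        simp only [neg_mul] at h2 ⊢
        exact h2
      have hexp := hlin.exp
      have := hFd.mul hexp
      convert this using 1
      · rfl
      · rfl
      · rfl
      rw [hBfy]
      field_simp
      ring
    intro x hx
    have h1 := eq_of_deriv_zero hd hx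
    rw [hF0] at h1
    simp only [Real.arcsin_zero, mul_zero, neg_zero, Real.exp_zero, mul_one, one_mul] at h1
    rw [Real.exp_neg] at h1
    have hepos : 0 < Real.exp (a * Real.arcsin x) := Real.exp_pos _
    field_simp at h1
    linarith [h1]
  -- summability of c
  have hsc : Summable c := by
    apply summable_of_sum_range_le (c := Real.exp (a * (Real.pi/2))) (fun n => (hpos n).le)
    intro N
    have hbound : ∀ t : ℝ, t ∈ Set.Ioo (0:ℝ) 1 →
        ∑ m ∈ Finset.range N, c m * t^m ≤ Real.exp (a * (Real.pi/2)) := by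
      intro t ht
      have ht1 : |t| < 1 := abs_lt.2 ⟨by linarith [ht.1], ht.2⟩
      have hsum := summable_pow_of_bound habs ht1
      have h1 : ∑ m ∈ Finset.range N, c m * t^m ≤ F t := by
        apply Summable.sum_le_tsum (Finset.range N) (fun m _ => ?_) hsum
        have := (hpos m).le
        have := ht.1.le
        positivity
      have h2 : F t = Real.exp (a * Real.arcsin t) := hIoo t ⟨by linarith [ht.1], ht.2⟩
      have h3 : Real.exp (a * Real.arcsin t) ≤ Real.exp (a * (Real.pi/2)) := by
        apply Real.exp_le_exp.mpr
        exact mul_le_mul_of_nonneg_left (Real.arcsin_le_pi_div_two t) ha.le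
      linarith
    have hlim : Filter.Tendsto (fun t : ℝ => ∑ m ∈ Finset.range N, c m * t^m)
        (nhdsWithin 1 (Set.Iio 1)) (nhds (∑ m ∈ Finset.range N, c m * (1:ℝ)^m)) := by
      apply Filter.Tendsto.mono_left _ nhdsWithin_le_nhds
      exact Continuous.tendsto (by continuity) 1
    have hev : ∀ᶠ t in nhdsWithin (1:ℝ) (Set.Iio 1),
        ∑ m ∈ Finset.range N, c m * t^m ≤ Real.exp (a * (Real.pi/2)) := by
      filter_upwards [Ioo_mem_nhdsLT_of_mem (by norm_num : (1:ℝ) ∈ Set.Ioc (0:ℝ) 1)] with t ht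
      exact hbound t ht
    have := le_of_tendsto hlim hev
    simpa using this
  -- continuity of F on the closed interval
  have hFc : ContinuousOn F (Set.Icc (-1:ℝ) 1) := by
    rw [hF]
    apply continuousOn_tsum (u := c) (fun n => (Continuous.continuousOn (by continuity))) hsc
    intro n y hy
    rw [Real.norm_eq_abs, abs_mul, abs_pow, abs_of_pos (hpos n)]
    have hy1 : |y| ≤ 1 := abs_le.2 ⟨hy.1, hy.2⟩
    calc c n * |y| ^ n ≤ c n * 1 := by
          apply mul_le_mul_of_nonneg_left _ (hpos n).le
          calc |y| ^ n ≤ 1 ^ n := pow_le_pow_left₀ (abs_nonneg y) hy1 n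
            _ = 1 := one_pow n
      _ = c n := mul_one _
  -- extend to the closed interval by continuity
  intro x hx
  have hxcl : x ∈ closure (Set.Ioo (-1:ℝ) 1) := by
    rw [closure_Ioo (by norm_num : (-1:ℝ) ≠ 1)]
    exact hx
  have hne : (nhdsWithin x (Set.Ioo (-1:ℝ) 1)).NeBot :=
    mem_closure_iff_nhdsWithin_neBot.mp hxcl
  have hLc : Continuous (fun y : ℝ => Real.exp (a * Real.arcsin y)) :=
    Real.continuous_exp.comp (continuous_const.mul Real.continuous_arcsin)
  have t1 : Filter.Tendsto (fun y : ℝ => Real.exp (a * Real.arcsin y))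
      (nhdsWithin x (Set.Ioo (-1:ℝ) 1)) (nhds (Real.exp (a * Real.arcsin x))) :=
    (hLc.tendsto x).mono_left nhdsWithin_le_nhds
  have t2 : Filter.Tendsto F (nhdsWithin x (Set.Ioo (-1:ℝ) 1)) (nhds (F x)) :=
    (hFc x hx).mono Set.Ioo_subset_Icc_self
  have t1' : Filter.Tendsto F (nhdsWithin x (Set.Ioo (-1:ℝ) 1))
      (nhds (Real.exp (a * Real.arcsin x))) := by
    apply t1.congr'
    filter_upwards [self_mem_nhdsWithin] with y hy
    exact (hIoo y hy).symm
  exact (tendsto_nhds_unique t2 t1').symm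

end ExpArccosAux

/-- For `a > 0` and `x ∈ [−1,1]`,
`exp(−a·arccos x) = e^{−aπ/2} ∑ (rₙ(a)/n!) xⁿ`, where the `rₙ` satisfy the
recursion `r₀ = 1`, `r_{n+1}(a) = a·∑_{k≤⌊n/2⌋} binom(n,2k)·r_{n−2k}(a)·((2k−1)!!)²`,
and each `rₙ(a) > 0` for `a > 0`. -/
theorem exp_neg_mul_arccos_expansion (r : ℕ → ℝ → ℝ)
    (h0 : ∀ a : ℝ, r 0 a = 1)
    (hrec : ∀ (n : ℕ) (a : ℝ), r (n + 1) a = a *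
      ∑ k ∈ Finset.range (n / 2 + 1),
        (Nat.choose n (2 * k) : ℝ) * r (n - 2 * k) a *
          (((∏ i ∈ Finset.range k, (2 * i + 1) : ℕ)) : ℝ) ^ 2)
    (a : ℝ) (ha : 0 < a) :
    (∀ n : ℕ, 0 < r n a) ∧
    ∀ x ∈ Set.Icc (-1 : ℝ) 1,
      Real.exp (-(a * Real.arccos x)) =
        Real.exp (-(a * Real.pi / 2)) *
          ∑' n : ℕ, r n a / (Nat.factorial n) * x ^ n := by
  classical
  open ExpArccosAux in
  have hdd : ∀ k : ℕ, ((∏ i ∈ Finset.range k, (2 * i + 1) : ℕ) : ℝ) = (dd k : ℝ) := by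
    intro k; rfl
  have hrpos : ∀ n : ℕ, 0 < r n a := by
    intro n
    induction n using Nat.strong_induction_on with
    | _ n ih =>
      cases n with
      | zero => rw [h0]; norm_num
      | succ m =>
        rw [hrec m a]
        apply mul_pos ha
        apply Finset.sum_pos ?_ ⟨0, Finset.mem_range.2 (by omega)⟩
        intro k hk
        simp only [Finset.mem_range] at hk
        have h2k : 2*k ≤ m := by omega
        apply mul_pos (mul_pos ?_ (ih (m - 2*k) (by omega)))
        · rw [hdd]
          apply pow_pos
          exact_mod_cast dd_pos k
        · exact_mod_cast Nat.choose_pos h2k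
  refine ⟨hrpos, ?_⟩
  set c : ℕ → ℝ := fun n => r n a / (Nat.factorial n) with hc
  have hpos : ∀ n, 0 < c n := fun n =>
    div_pos (hrpos n) (by exact_mod_cast Nat.factorial_pos n)
  have hc0 : c 0 = 1 := by simp [hc, h0]
  have hkey : ∀ n : ℕ, ((n:ℝ)+1) * c (n+1) =
      a * ∑ k ∈ Finset.range (n/2+1), c (n - 2*k) * bb k := by
    intro n
    have hfacn : ((Nat.factorial n : ℕ) : ℝ) ≠ 0 := by
      exact_mod_cast (Nat.factorial_pos n).ne'
    have hlhs : ((n:ℝ)+1) * c (n+1) = r (n+1) a / (Nat.factorial n) := by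
      rw [hc]
      simp only
      rw [Nat.factorial_succ]
      push_cast
      field_simp
    rw [hlhs, hrec n a, Finset.mul_sum, Finset.sum_div, Finset.mul_sum]
    apply Finset.sum_congr rfl
    intro k hk
    simp only [Finset.mem_range] at hk
    have h2k : 2*k ≤ n := by omega
    have hfact : ((Nat.choose n (2*k) : ℕ) : ℝ) * (Nat.factorial (2*k)) *
        (Nat.factorial (n - 2*k)) = (Nat.factorial n : ℝ) := by
      exact_mod_cast congrArg (Nat.cast (R := ℝ))
        (Nat.choose_mul_factorial_mul_factorial h2k)
    have hch : ((Nat.choose n (2*k) : ℕ) : ℝ) ≠ 0 := by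
      exact_mod_cast (Nat.choose_pos h2k).ne'
    have hf2k : ((Nat.factorial (2*k) : ℕ) : ℝ) ≠ 0 := by
      exact_mod_cast (Nat.factorial_pos (2*k)).ne'
    have hfnk : ((Nat.factorial (n-2*k) : ℕ) : ℝ) ≠ 0 := by
      exact_mod_cast (Nat.factorial_pos (n-2*k)).ne'
    rw [hc, hdd]
    simp only
    rw [bb_eq, ← hfact]
    field_simp
  have hmain := main a ha c hpos hc0 hkey
  intro x hx
  have := hmain x hx
  rw [Real.arccos_eq_pi_div_two_sub_arcsin]
  have hsplit : -(a * (Real.pi / 2 - Real.arcsin x)) =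
      -(a * Real.pi / 2) + a * Real.arcsin x := by ring
  rw [hsplit, Real.exp_add, this]
end

section
/- Let h : ℝ → ℝ be continuous with compact support, max h = 1, h > 0 on [0,1], and 𝓕h ∉ L¹(ℝ). Let (a_n)_{n∈ℤ} be positive reals with a_0 = 1/2 and ∑_{n≠0} a_n = 1/4. Then f(x) = ∑_{n∈ℤ} a_n h(x−n) is continuous, satisfies 0 < f(x) ≤ 3/4 for all x, is integrable with ∫f = (3/4)∫h, and |𝓕f(t)| ≥ (1/4)|𝓕h(t)| for all t; in particular 𝓕f ∉ L¹(ℝ). -/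
open scoped BigOperators

open MeasureTheory

/-- Periodization: if `h` is continuous with compact support, `0 ≤ h ≤ 1`, `max h = 1`,
`h > 0` on `[0,1]`, `𝓕h ∉ L¹(ℝ)`, and `(aₙ)_{n∈ℤ}` are positive reals with `a₀ = 1/2`
and `∑_{n≠0} aₙ = 1/4`, then `f(x) = ∑_{n∈ℤ} aₙ h(x−n)` is continuous, satisfies
`0 < f ≤ 3/4`, is integrable with `∫ f = (3/4)∫ h`, satisfies
`|𝓕f(t)| ≥ (1/4)|𝓕h(t)|`, and `𝓕f ∉ L¹(ℝ)`. -/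
theorem periodization_fourier_lower_bound
    (h : ℝ → ℝ) (hcont : Continuous h) (hsupp : HasCompactSupport h)
    (hnn : ∀ x, 0 ≤ h x) (hle : ∀ x, h x ≤ 1) (hmax : ∃ x₀, h x₀ = 1)
    (hpos : ∀ x ∈ Set.Icc (0 : ℝ) 1, 0 < h x)
    (hFh : ¬ MeasureTheory.Integrable (fun t : ℝ =>
      ∫ x : ℝ, Complex.exp (-((t : ℂ) * (x : ℂ)) * Complex.I) * (h x : ℂ)))
    (a : ℤ → ℝ) (hapos : ∀ n, 0 < a n) (ha0 : a 0 = 1 / 2)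
    (hasum : HasSum (fun n : {n : ℤ // n ≠ 0} => a n) (1 / 4))
    (f : ℝ → ℝ) (hf : ∀ x, f x = ∑' n : ℤ, a n * h (x - n)) :
    Continuous f ∧
    (∀ x, 0 < f x ∧ f x ≤ 3 / 4) ∧
    MeasureTheory.Integrable f ∧
    (∫ x, f x) = 3 / 4 * ∫ x, h x ∧
    (∀ t : ℝ,
      (1 / 4) * ‖∫ x : ℝ, Complex.exp (-((t : ℂ) * (x : ℂ)) * Complex.I) * (h x : ℂ)‖ ≤
        ‖∫ x : ℝ, Complex.exp (-((t : ℂ) * (x : ℂ)) * Complex.I) * (f x : ℂ)‖) ∧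
    ¬ MeasureTheory.Integrable (fun t : ℝ =>
      ∫ x : ℝ, Complex.exp (-((t : ℂ) * (x : ℂ)) * Complex.I) * (f x : ℂ)) := by
  have hInt : Integrable h := hcont.integrable_of_hasCompactSupport hsupp
  set I : ℝ := ∫ x, h x with hI
  have hInn : 0 ≤ I := integral_nonneg hnn
  -- summability of `a`
  have hsA : Summable a :=
    (Set.finite_singleton (0:ℤ)).summable_compl_iff.mp hasum.summable
  have htsumA : ∑' n : ℤ, a n = 3 / 4 := by
    have := hsA.tsum_subtype_add_tsum_subtype_compl {0}
    rw [tsum_singleton (0:ℤ) a, ha0] at this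
    have h2 : (∑' n : ↥({0}:Set ℤ)ᶜ, a n) = 1/4 := hasum.tsum_eq
    rw [h2] at this
    linarith
  -- pointwise summability & bounds
  have hterm_nn : ∀ n x, 0 ≤ a n * h (x - n) :=
    fun n x => mul_nonneg (hapos n).le (hnn _)
  have hterm_le : ∀ n x, a n * h (x - n) ≤ a n := fun n x => by
    nlinarith [hle (x - n), hnn (x - n), hapos n]
  have hsx : ∀ x : ℝ, Summable (fun n : ℤ => a n * h (x - n)) := fun x =>
    Summable.of_nonneg_of_le (fun n => hterm_nn n x) (fun n => hterm_le n x) hsA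
  -- continuity
  have hfc : Continuous f := by
    have : Continuous fun x : ℝ => ∑' n : ℤ, a n * h (x - n) := by
      refine continuous_tsum (fun n => continuous_const.mul
        (hcont.comp (continuous_id.sub continuous_const))) hsA (fun n x => ?_)
      rw [Real.norm_eq_abs, abs_of_nonneg (hterm_nn n x)]
      exact hterm_le n x
    simpa [funext hf] using this
  -- pointwise bounds for f
  have hbounds : ∀ x, 0 < f x ∧ f x ≤ 3 / 4 := by
    intro x
    constructor
    · have hfr : Int.fract x ∈ Set.Icc (0:ℝ) 1 :=
        ⟨Int.fract_nonneg x, (Int.fract_lt_one x).le⟩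
      have hpos' : 0 < a ⌊x⌋ * h (x - ⌊x⌋) := by
        have := hpos _ hfr
        rw [Int.fract] at this
        exact mul_pos (hapos _) this
      calc (0:ℝ) < a ⌊x⌋ * h (x - ⌊x⌋) := hpos'
        _ ≤ ∑' n : ℤ, a n * h (x - n) :=
            Summable.le_tsum (hsx x) ⌊x⌋ (fun m _ => hterm_nn m x)
        _ = f x := (hf x).symm
    · rw [hf x, ← htsumA]
      exact Summable.tsum_le_tsum (fun n => hterm_le n x) (hsx x) hsA
  -- integrability of each term and integrals
  have g_int : ∀ n : ℤ, Integrable (fun x => a n * h (x - n)) := fun n =>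
    ((hInt.comp_sub_right (n:ℝ)).const_mul _)
  have g_integral : ∀ n : ℤ, (∫ x, a n * h (x - n)) = a n * I := by
    intro n
    rw [integral_const_mul, integral_sub_right_eq_self h (n:ℝ)]
  have g_norm_integral : ∀ n : ℤ, (∫ x, ‖a n * h (x - n)‖) = a n * I := by
    intro n
    rw [← g_integral n]
    congr 1; funext x
    rw [Real.norm_eq_abs, abs_of_nonneg (hterm_nn n x)]
  have hsum_norms : Summable fun n : ℤ => ∫ x, ‖a n * h (x - n)‖ := by
    have : (fun n : ℤ => ∫ x, ‖a n * h (x - n)‖) = fun n => a n * I := funext g_norm_integral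
    rw [this]; exact hsA.mul_right I
  -- integrability of f
  have hfInt : Integrable f := by
    rw [← lintegral_ofReal_ne_top_iff_integrable hfc.aestronglyMeasurable
      (Filter.Eventually.of_forall fun x => (hbounds x).1.le)]
    have key : ∀ x, ENNReal.ofReal (f x) = ∑' n : ℤ, ENNReal.ofReal (a n * h (x - n)) := by
      intro x
      rw [hf x, ENNReal.ofReal_tsum_of_nonneg (fun n => hterm_nn n x) (hsx x)]
    calc ∫⁻ x, ENNReal.ofReal (f x)
        = ∫⁻ x, ∑' n : ℤ, ENNReal.ofReal (a n * h (x - n)) := by simp_rw [key]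
      _ = ∑' n : ℤ, ∫⁻ x, ENNReal.ofReal (a n * h (x - n)) :=
          lintegral_tsum (fun n => (ENNReal.continuous_ofReal.comp (continuous_const.mul
            (hcont.comp (continuous_id.sub continuous_const)))).measurable.aemeasurable)
      _ = ∑' n : ℤ, ENNReal.ofReal (a n * I) := by
          congr 1; funext n
          rw [← ofReal_integral_eq_lintegral_ofReal (g_int n)
            (Filter.Eventually.of_forall fun x => hterm_nn n x), g_integral n]
      _ = ENNReal.ofReal (∑' n : ℤ, a n * I) :=
          (ENNReal.ofReal_tsum_of_nonneg (fun n => mul_nonneg (hapos n).le hInn)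
            (hsA.mul_right I)).symm
      _ ≠ ⊤ := ENNReal.ofReal_ne_top
  -- integral of f
  have hfIntegral : (∫ x, f x) = 3 / 4 * I := by
    have heq : (∫ x, f x) = ∫ x, ∑' n : ℤ, a n * h (x - n) := by simp_rw [hf]
    rw [heq, ← integral_tsum_of_summable_integral_norm g_int hsum_norms]
    simp_rw [g_integral]
    rw [tsum_mul_right, htsumA]
  -- Fourier transform part
  have norm_e : ∀ t x : ℝ, ‖Complex.exp (-((t : ℂ) * (x : ℂ)) * Complex.I)‖ = 1 := by
    intro t x
    simp [Complex.norm_exp]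
  have hF : ∀ t : ℝ,
      (∫ x : ℝ, Complex.exp (-((t : ℂ) * (x : ℂ)) * Complex.I) * (f x : ℂ)) =
      (∑' n : ℤ, (a n : ℂ) * Complex.exp (-((t : ℂ) * (n : ℂ)) * Complex.I)) *
        (∫ x : ℝ, Complex.exp (-((t : ℂ) * (x : ℂ)) * Complex.I) * (h x : ℂ)) := by
    intro t
    have hsummand : ∀ x : ℝ, Complex.exp (-((t : ℂ) * (x : ℂ)) * Complex.I) * (f x : ℂ) =
        ∑' n : ℤ, Complex.exp (-((t : ℂ) * (x : ℂ)) * Complex.I) * ((a n * h (x - n) : ℝ) : ℂ) := by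
      intro x
      rw [hf x, Complex.ofReal_tsum, tsum_mul_left]
    have hFint : ∀ n : ℤ, Integrable (fun x : ℝ =>
        Complex.exp (-((t : ℂ) * (x : ℂ)) * Complex.I) * ((a n * h (x - n) : ℝ) : ℂ)) := by
      intro n
      refine (g_int n).ofReal.bdd_mul ?_ (Filter.Eventually.of_forall fun x => (norm_e t x).le)
      exact (Complex.continuous_exp.comp (by fun_prop)).aestronglyMeasurable
    have hFnorm : Summable fun n : ℤ => ∫ x : ℝ,
        ‖Complex.exp (-((t : ℂ) * (x : ℂ)) * Complex.I) * ((a n * h (x - n) : ℝ) : ℂ)‖ := by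
      have : ∀ n : ℤ, (∫ x : ℝ,
          ‖Complex.exp (-((t : ℂ) * (x : ℂ)) * Complex.I) * ((a n * h (x - n) : ℝ) : ℂ)‖)
          = ∫ x, ‖a n * h (x - n)‖ := by
        intro n; congr 1; funext x
        rw [norm_mul, norm_e, one_mul, Complex.norm_real]
      rw [funext this]; exact hsum_norms
    have hterm_int : ∀ n : ℤ, (∫ x : ℝ,
        Complex.exp (-((t : ℂ) * (x : ℂ)) * Complex.I) * ((a n * h (x - n) : ℝ) : ℂ)) =
        ((a n : ℂ) * Complex.exp (-((t : ℂ) * (n : ℂ)) * Complex.I)) *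
          ∫ x : ℝ, Complex.exp (-((t : ℂ) * (x : ℂ)) * Complex.I) * (h x : ℂ) := by
      intro n
      have hpt : ∀ x : ℝ, Complex.exp (-((t : ℂ) * (x : ℂ)) * Complex.I) *
          ((a n * h (x - n) : ℝ) : ℂ) =
          ((a n : ℂ) * Complex.exp (-((t : ℂ) * (n : ℂ)) * Complex.I)) *
            (Complex.exp (-((t : ℂ) * ((x - n : ℝ) : ℂ)) * Complex.I) * ((h (x - n) : ℝ) : ℂ)) := by
        intro x
        have hx : ((x : ℝ) : ℂ) = ((x - n : ℝ) : ℂ) + (n : ℂ) := by push_cast; ring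
        rw [hx]
        rw [show -((t : ℂ) * (((x - n : ℝ) : ℂ) + (n : ℂ))) * Complex.I =
          (-((t : ℂ) * (n : ℂ)) * Complex.I) + (-((t : ℂ) * ((x - n : ℝ) : ℂ)) * Complex.I) by ring]
        rw [Complex.exp_add]
        push_cast
        ring
      simp_rw [hpt]
      rw [integral_const_mul]
      congr 1
      exact integral_sub_right_eq_self
        (fun y : ℝ => Complex.exp (-((t : ℂ) * (y : ℂ)) * Complex.I) * ((h y : ℝ) : ℂ)) (n:ℝ)
    calc (∫ x : ℝ, Complex.exp (-((t : ℂ) * (x : ℂ)) * Complex.I) * (f x : ℂ))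
        = ∫ x : ℝ, ∑' n : ℤ, Complex.exp (-((t : ℂ) * (x : ℂ)) * Complex.I) *
            ((a n * h (x - n) : ℝ) : ℂ) := by simp_rw [hsummand]
      _ = ∑' n : ℤ, ∫ x : ℝ, Complex.exp (-((t : ℂ) * (x : ℂ)) * Complex.I) *
            ((a n * h (x - n) : ℝ) : ℂ) :=
          (integral_tsum_of_summable_integral_norm hFint hFnorm).symm
      _ = ∑' n : ℤ, ((a n : ℂ) * Complex.exp (-((t : ℂ) * (n : ℂ)) * Complex.I)) *
            ∫ x : ℝ, Complex.exp (-((t : ℂ) * (x : ℂ)) * Complex.I) * (h x : ℂ) := by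
          simp_rw [hterm_int]
      _ = _ := tsum_mul_right
  -- lower bound on the coefficient sum
  have hcoef : ∀ t : ℝ, (1/4 : ℝ) ≤
      ‖∑' n : ℤ, (a n : ℂ) * Complex.exp (-((t : ℂ) * (n : ℂ)) * Complex.I)‖ := by
    intro t
    set c : ℤ → ℂ := fun n => (a n : ℂ) * Complex.exp (-((t : ℂ) * (n : ℂ)) * Complex.I) with hc
    have hnormc : ∀ n, ‖c n‖ = a n := by
      intro n
      simp [hc, Complex.norm_exp, map_mul, abs_of_pos (hapos n)]
    have hsc : Summable c := by
      refine Summable.of_norm ?_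
      simpa [hnormc] using hsA
    have hsplit := hsc.tsum_subtype_add_tsum_subtype_compl {0}
    rw [tsum_singleton (0:ℤ) c] at hsplit
    have hc0 : ‖c 0‖ = 1/2 := by rw [hnormc 0, ha0]
    have hT : ‖∑' n : ↥({0}:Set ℤ)ᶜ, c n‖ ≤ 1/4 := by
      have h1 : ‖∑' n : ↥({0}:Set ℤ)ᶜ, c n‖ ≤ ∑' n : ↥({0}:Set ℤ)ᶜ, ‖c n‖ :=
        norm_tsum_le_tsum_norm (by
          have : Summable fun n : ℤ => ‖c n‖ := by simpa [hnormc] using hsA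
          exact this.subtype _)
      have h2 : (∑' n : ↥({0}:Set ℤ)ᶜ, ‖c n‖) = 1/4 := by
        have : (∑' n : ↥({0}:Set ℤ)ᶜ, ‖c (n : ℤ)‖) = ∑' n : ↥({0}:Set ℤ)ᶜ, a n := by
          congr 1; funext n; exact hnormc n
        rw [this]
        exact hasum.tsum_eq
      linarith
    have h3 : ‖c 0‖ - ‖∑' n : ↥({0}:Set ℤ)ᶜ, c n‖ ≤ ‖∑' n : ℤ, c n‖ := by
      have h4 : ‖c 0‖ ≤ ‖∑' n : ℤ, c n‖ + ‖∑' n : ↥({0}:Set ℤ)ᶜ, c n‖ := by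
        have heq : c 0 = (∑' n : ℤ, c n) - ∑' n : ↥({0}:Set ℤ)ᶜ, c n := by
          rw [← hsplit]; ring
        calc ‖c 0‖ = ‖(∑' n : ℤ, c n) - ∑' n : ↥({0}:Set ℤ)ᶜ, c n‖ := by rw [heq]
          _ ≤ _ := norm_sub_le _ _
      linarith
    rw [hc0] at h3
    linarith
  have hFbound : ∀ t : ℝ,
      (1 / 4) * ‖∫ x : ℝ, Complex.exp (-((t : ℂ) * (x : ℂ)) * Complex.I) * (h x : ℂ)‖ ≤
        ‖∫ x : ℝ, Complex.exp (-((t : ℂ) * (x : ℂ)) * Complex.I) * (f x : ℂ)‖ := by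
    intro t
    rw [hF t, norm_mul]
    exact mul_le_mul_of_nonneg_right (hcoef t) (norm_nonneg _)
  refine ⟨hfc, hbounds, hfInt, hfIntegral, hFbound, ?_⟩
  -- non-integrability of the Fourier transform of f
  intro hIntF
  apply hFh
  have hFhCont : Continuous fun t : ℝ =>
      ∫ x : ℝ, Complex.exp (-((t : ℂ) * (x : ℂ)) * Complex.I) * (h x : ℂ) := by
    refine continuous_of_dominated (fun t => ?_) (fun t => ?_) hInt.norm ?_
    · exact (Complex.continuous_exp.comp (by fun_prop)).aestronglyMeasurable.mul
        (Complex.continuous_ofReal.comp hcont).aestronglyMeasurable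
    · filter_upwards with x
      rw [norm_mul, norm_e, one_mul, Complex.norm_real]
    · filter_upwards with x
      exact (Complex.continuous_exp.comp (by fun_prop)).mul continuous_const
  refine (hIntF.norm.const_mul 4).mono' hFhCont.aestronglyMeasurable ?_
  filter_upwards with t
  have := hFbound t
  linarith
end

section
/- Let h : ℝ^d × ℝ → ℂ be continuous such that (C1') for each ω ∈ ℝ^d the function h(ω,·) is a continuous positive definite integrable function on ℝ, and (C2') ∫_{ℝ^d} h(ω,0) dω < ∞. Then C(x,u) := ∫_{ℝ^d} e^{i⟨x,ω⟩} h(ω,u) dω is a continuous positive definite function on ℝ^d × ℝ ≅ ℝ^{d+1}. -/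
open scoped BigOperators
open MeasureTheory Complex

lemma pd_aux (f : ℝ → ℂ)
    (hpd : ∀ (N : ℕ) (u : Fin N → ℝ) (c : Fin N → ℂ),
      0 ≤ (∑ i, ∑ j, f (u i - u j) * c i * (starRingEnd ℂ) (c j)).re ∧
      (∑ i, ∑ j, f (u i - u j) * c i * (starRingEnd ℂ) (c j)).im = 0) :
    f 0 = ((f 0).re : ℂ) ∧ 0 ≤ (f 0).re ∧ ∀ u, ‖f u‖ ≤ (f 0).re := by
  have h1 := hpd 1 (fun _ => 0) (fun _ => 1)
  simp [Fin.sum_univ_one] at h1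
  have him0 : (f 0).im = 0 := h1.2
  have hre0 : 0 ≤ (f 0).re := h1.1
  refine ⟨Complex.ext rfl (by simp [him0]), hre0, fun t => ?_⟩
  -- hermitian
  have herm : ∀ t : ℝ, f (-t) = (starRingEnd ℂ) (f t) := by
    intro t
    have hA := hpd 2 ![0, t] ![1, 1]
    have hB := hpd 2 ![0, t] ![1, Complex.I]
    simp [Fin.sum_univ_two] at hA hB
    have hA2 : (f (-t)).im + (f t).im = 0 := by
      have := hA.2
      simp [Complex.add_im, him0] at this
      linarith [this]
    have hB2 : (f t).re - (f (-t)).re = 0 := by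
      have := hB.2
      simp [Complex.mul_im, Complex.add_im, him0] at this
      linarith [this]
    apply Complex.ext <;> simp <;> linarith
  by_cases ht : f t = 0
  · simp [ht, hre0]
  · have hnt : ‖f t‖ ≠ 0 := by simpa using ht
    have hcnt : ((‖f t‖ : ℝ) : ℂ) ≠ 0 := by exact_mod_cast hnt
    set z : ℂ := -(starRingEnd ℂ) (f t) / ‖f t‖ with hz
    have hS := (hpd 2 ![0, t] ![1, z]).1
    have hzz : z * (starRingEnd ℂ) z = 1 := by
      rw [hz]
      simp only [map_div₀, map_neg, Complex.conj_conj, Complex.conj_ofReal]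
      rw [div_mul_div_comm, neg_mul_neg, mul_comm ((starRingEnd ℂ) (f t)), Complex.mul_conj]
      rw [div_eq_one_iff_eq (by simpa using hcnt)]
      rw [Complex.normSq_eq_norm_sq]
      norm_cast
      ring
    have h2 : f t * z = -‖f t‖ := by
      rw [hz, mul_div_assoc', mul_neg, Complex.mul_conj, Complex.normSq_eq_norm_sq]
      push_cast
      have hca : ((‖f t‖ : ℝ) : ℂ) ≠ 0 := by
        exact hcnt
      field_simp
    have h3 : f (-t) * (starRingEnd ℂ) z = -‖f t‖ := by
      rw [herm t, hz]
      simp only [map_div₀, map_neg, Complex.conj_conj, Complex.conj_ofReal]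
      rw [mul_div_assoc', mul_neg, mul_comm, Complex.mul_conj, Complex.normSq_eq_norm_sq]
      push_cast
      have hca : ((‖f t‖ : ℝ) : ℂ) ≠ 0 := by
        exact hcnt
      field_simp
    have key : (∑ i, ∑ j, f ((![0,t] : Fin 2 → ℝ) i - ![0,t] j) * (![1,z] : Fin 2 → ℂ) i * (starRingEnd ℂ) ((![1,z] : Fin 2 → ℂ) j))
        = 2 * f 0 - 2 * ‖f t‖ := by
      simp [Fin.sum_univ_two]
      rw [mul_assoc (f 0), hzz, mul_one, h2, h3]
      ring
    rw [key] at hS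
    simp [Complex.sub_re, Complex.mul_re] at hS
    linarith


lemma pd_aux' (f : ℝ → ℂ)
    (hpd : ∀ (N : ℕ) (u : Fin N → ℝ) (c : Fin N → ℂ),
      0 ≤ (∑ i, ∑ j, f (u i - u j) * c i * (starRingEnd ℂ) (c j)).re ∧
      (∑ i, ∑ j, f (u i - u j) * c i * (starRingEnd ℂ) (c j)).im = 0) :
    ∀ u, ‖f u‖ ≤ ‖f 0‖ := by
  intro u
  have ⟨h0, hre, hb⟩ := pd_aux f hpd
  calc ‖f u‖ ≤ (f 0).re := hb u
    _ ≤ ‖f 0‖ := Complex.re_le_norm _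

noncomputable def chF {d : ℕ} (h : (Fin d → ℝ) → ℝ → ℂ) (p : (Fin d → ℝ) × ℝ) (ω : Fin d → ℝ) : ℂ :=
  Complex.exp (((∑ i, p.1 i * ω i : ℝ) : ℂ) * Complex.I) * h ω p.2

lemma chF_def {d : ℕ} (h : (Fin d → ℝ) → ℝ → ℂ) (p : (Fin d → ℝ) × ℝ) (ω : Fin d → ℝ) :
    chF h p ω = Complex.exp (((∑ i, p.1 i * ω i : ℝ) : ℂ) * Complex.I) * h ω p.2 := rfl

set_option maxHeartbeats 1000000 in
/-- Cressie–Huang construction: if `h : ℝᵈ × ℝ → ℂ` is continuous, `h(ω,·)` is a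
continuous positive definite integrable function on `ℝ` for each `ω`, and
`ω ↦ h(ω,0)` is integrable on `ℝᵈ`, then
`C(x,u) = ∫ e^{i⟨x,ω⟩} h(ω,u) dω` is a continuous positive definite function on
`ℝᵈ × ℝ`. -/
theorem cressie_huang_construction {d : ℕ} (h : (Fin d → ℝ) → ℝ → ℂ)
    (hcont : Continuous fun p : (Fin d → ℝ) × ℝ => h p.1 p.2)
    (hpd : ∀ ω : Fin d → ℝ, ∀ (N : ℕ) (u : Fin N → ℝ) (c : Fin N → ℂ),
      0 ≤ (∑ i, ∑ j, h ω (u i - u j) * c i * (starRingEnd ℂ) (c j)).re ∧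
      (∑ i, ∑ j, h ω (u i - u j) * c i * (starRingEnd ℂ) (c j)).im = 0)
    (hint : ∀ ω : Fin d → ℝ, MeasureTheory.Integrable (h ω))
    (hint0 : MeasureTheory.Integrable fun ω : Fin d → ℝ => h ω 0)
    (C : (Fin d → ℝ) × ℝ → ℂ)
    (hC : ∀ (x : Fin d → ℝ) (u : ℝ), C (x, u) =
      ∫ ω : Fin d → ℝ,
        Complex.exp (((∑ i, x i * ω i : ℝ) : ℂ) * Complex.I) * h ω u) :
    Continuous C ∧
    ∀ (N : ℕ) (v : Fin N → (Fin d → ℝ) × ℝ) (c : Fin N → ℂ),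
      0 ≤ (∑ i, ∑ j, C (v i - v j) * c i * (starRingEnd ℂ) (c j)).re ∧
      (∑ i, ∑ j, C (v i - v j) * c i * (starRingEnd ℂ) (c j)).im = 0 := by
  have hb : ∀ ω u, ‖h ω u‖ ≤ ‖h ω 0‖ := fun ω => pd_aux' (h ω) (hpd ω)
  have hF := chF_def h
  have hFcont : Continuous fun q : ((Fin d → ℝ) × ℝ) × (Fin d → ℝ) => chF h q.1 q.2 := by
    simp only [chF_def]
    apply Continuous.mul
    · apply Complex.continuous_exp.comp
      apply Continuous.mul _ continuous_const
      apply Complex.continuous_ofReal.comp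
      exact continuous_finset_sum _ fun i _ => ((continuous_apply i).comp
        (continuous_fst.comp continuous_fst)).mul ((continuous_apply i).comp continuous_snd)
    · exact hcont.comp (continuous_snd.prodMk (continuous_snd.comp continuous_fst))
  have hFcont1 : ∀ p, Continuous (chF h p) := by
    intro p
    have hc := hFcont.comp (Continuous.prodMk
      (continuous_const : Continuous fun _ : (Fin d → ℝ) => p) continuous_id)
    exact hc
  have hFcont2 : ∀ ω, Continuous fun p => chF h p ω := by
    intro ω
    have hc := hFcont.comp (Continuous.prodMk continuous_id
      (continuous_const : Continuous fun _ : (Fin d → ℝ) × ℝ => ω))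
    exact hc
  have hFnorm : ∀ p ω, ‖chF h p ω‖ = ‖h ω p.2‖ := by
    intro p ω
    rw [hF, norm_mul, Complex.norm_exp_ofReal_mul_I, one_mul]
  have hFint : ∀ p, Integrable (chF h p) := by
    intro p
    refine (hint0.norm.mono' (hFcont1 p).aestronglyMeasurable ?_)
    filter_upwards with ω
    rw [hFnorm]
    exact hb ω p.2
  have hCeq : C = fun p => ∫ ω, chF h p ω := by
    funext p
    simp only [hF]
    exact hC p.1 p.2
  constructor
  · rw [hCeq]
    apply MeasureTheory.continuous_of_dominated (bound := fun ω => ‖h ω 0‖)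
      (fun p => (hFcont1 p).aestronglyMeasurable)
      (fun p => by filter_upwards with ω; rw [hFnorm]; exact hb ω p.2)
      hint0.norm
    filter_upwards with ω
    exact hFcont2 ω
  · intro N v c
    -- rewrite each term as an integral of a product
    have hterm : ∀ i j, C (v i - v j) * c i * (starRingEnd ℂ) (c j)
        = ∫ ω, chF h (v i - v j) ω * c i * (starRingEnd ℂ) (c j) := by
      intro i j
      rw [hCeq]
      rw [← MeasureTheory.integral_mul_const, ← MeasureTheory.integral_mul_const]
    have hGint : ∀ i j, Integrable (fun ω => chF h (v i - v j) ω * c i * (starRingEnd ℂ) (c j)) :=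
      fun i j => ((hFint _).mul_const _).mul_const _
    have hsum : (∑ i, ∑ j, C (v i - v j) * c i * (starRingEnd ℂ) (c j))
        = ∫ ω, ∑ i, ∑ j, chF h (v i - v j) ω * c i * (starRingEnd ℂ) (c j) := by
      rw [MeasureTheory.integral_finset_sum _ (fun i _ =>
        integrable_finset_sum _ (fun j _ => hGint i j))]
      refine Finset.sum_congr rfl fun i _ => ?_
      rw [MeasureTheory.integral_finset_sum _ (fun j _ => hGint i j)]
      exact Finset.sum_congr rfl fun j _ => hterm i j
    -- pointwise positivity of the inner sum
    have hpoint : ∀ ω : Fin d → ℝ,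
        (∑ i, ∑ j, chF h (v i - v j) ω * c i * (starRingEnd ℂ) (c j))
        = ∑ i, ∑ j, h ω ((v i).2 - (v j).2) *
            (Complex.exp (((∑ k, (v i).1 k * ω k : ℝ) : ℂ) * Complex.I) * c i) *
            (starRingEnd ℂ) (Complex.exp (((∑ k, (v j).1 k * ω k : ℝ) : ℂ) * Complex.I) * c j) := by
      intro ω
      refine Finset.sum_congr rfl fun i _ => Finset.sum_congr rfl fun j _ => ?_
      rw [hF]
      simp only [map_mul, ← Complex.exp_conj, map_mul, Complex.conj_ofReal, Complex.conj_I]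
      have hsub : (v i - v j).2 = (v i).2 - (v j).2 := rfl
      have hsub1 : (∑ k, (v i - v j).1 k * ω k : ℝ)
          = (∑ k, (v i).1 k * ω k) - (∑ k, (v j).1 k * ω k) := by
        rw [← Finset.sum_sub_distrib]
        refine Finset.sum_congr rfl fun k _ => ?_
        have : (v i - v j).1 k = (v i).1 k - (v j).1 k := rfl
        rw [this, sub_mul]
      rw [hsub, hsub1]
      rw [show (((∑ k, (v i).1 k * ω k) - (∑ k, (v j).1 k * ω k) : ℝ) : ℂ) * Complex.I
          = ((∑ k, (v i).1 k * ω k : ℝ) : ℂ) * Complex.I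
            + ((∑ k, (v j).1 k * ω k : ℝ) : ℂ) * (-Complex.I) by push_cast; ring,
        Complex.exp_add]
      ring
    have hpos : ∀ ω, 0 ≤ (∑ i, ∑ j, chF h (v i - v j) ω * c i * (starRingEnd ℂ) (c j)).re ∧
        (∑ i, ∑ j, chF h (v i - v j) ω * c i * (starRingEnd ℂ) (c j)).im = 0 := by
      intro ω
      rw [hpoint ω]
      exact hpd ω N (fun i => (v i).2)
        (fun i => Complex.exp (((∑ k, (v i).1 k * ω k : ℝ) : ℂ) * Complex.I) * c i)
    have hSint : Integrable (fun ω => ∑ i, ∑ j, chF h (v i - v j) ω * c i * (starRingEnd ℂ) (c j)) :=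
      integrable_finset_sum _ fun i _ => integrable_finset_sum _ fun j _ => hGint i j
    rw [hsum]
    constructor
    · have := integral_re hSint
      simp only [RCLike.re_to_complex] at this
      rw [← this]
      exact integral_nonneg fun ω => (hpos ω).1
    · have := integral_im hSint
      simp only [RCLike.im_to_complex] at this
      rw [← this]
      simp only [fun ω => (hpos ω).2]
      exact integral_zero _ _
end

section
/- Let f : ℝ^n → ℂ be continuous and integrable with Fourier transform 𝓕f(ξ) = ∫ e^{−i⟨ξ,x⟩} f(x) dx satisfying 𝓕f(ξ) ≥ 0 for all ξ ∈ ℝ^n. Then f is positive definite, 𝓕f ∈ L¹(ℝ^n), and f(x) = (2π)^{−n} ∫ e^{i⟨x,ξ⟩} 𝓕f(ξ) dξ for every x ∈ ℝ^n. -/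
open scoped BigOperators

section BochnerAux
open MeasureTheory Complex Filter FourierTransform Real Module
open scoped Topology RealInnerProductSpace
variable {V : Type*} [NormedAddCommGroup V] [InnerProductSpace ℝ V]
  [MeasurableSpace V] [BorelSpace V] [FiniteDimensional ℝ V]

lemma tendsto_gauss_mul_fourier {g : V → ℂ} (hg : Continuous g) (hg1 : Integrable g) :
    Tendsto (fun (c : ℝ) ↦ ∫ w : V, cexp (- (c:ℂ)⁻¹ * ‖w‖^2) * 𝓕 g w) atTop (𝓝 (g 0)) := by
  have B : Tendsto (fun (c : ℝ) ↦ (∫ w : V,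
        𝓕 (fun w ↦ cexp (- (c:ℂ)⁻¹ * ‖w‖^2 + 2 * π * I * ⟪(0:V), w⟫)) w • g w)) atTop
      (𝓝 (g 0)) := by
    have C : Tendsto (fun (c : ℝ) ↦
        ∫ w : V, ((π * c : ℂ) ^ (finrank ℝ V / 2 : ℂ) * cexp (-π ^ 2 * c * ‖(0:V) - w‖ ^ 2)) • g w)
        atTop (𝓝 (g 0)) := Real.tendsto_integral_gaussian_smul' hg1 hg.continuousAt
    apply C.congr'
    filter_upwards [Ioi_mem_atTop 0] with c (hc : 0 < c)
    congr with w
    rw [fourier_gaussian_innerProductSpace' (by simpa)]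
    have hc0 : (c:ℂ) ≠ 0 := by exact_mod_cast hc.ne'
    have h1 : ((π:ℂ) / ((c:ℂ))⁻¹) = (π:ℂ) * c := by field_simp
    have h2 : (-(π:ℂ)^2 * (‖(0:V)-w‖:ℂ)^2 / ((c:ℂ))⁻¹) = -(π:ℂ)^2 * c * (‖(0:V)-w‖:ℂ)^2 := by
      field_simp
    rw [h1, h2]
  have A : Tendsto (fun (c : ℝ) ↦ ∫ w : V,
      cexp (- (c:ℂ)⁻¹ * ‖w‖^2 + 2 * π * I * ⟪(0:V), w⟫) • 𝓕 g w) atTop (𝓝 (g 0)) := by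
    apply B.congr'
    filter_upwards [Ioi_mem_atTop 0] with c (hc : 0 < c)
    have J : Integrable (fun w : V ↦ cexp (- (c:ℂ)⁻¹ * ‖w‖^2 + 2 * π * I * ⟪(0:V), w⟫)) :=
      GaussianFourier.integrable_cexp_neg_mul_sq_norm_add (by simpa) _ _
    simpa using! (VectorFourier.integral_fourierIntegral_smul_eq_flip (L := innerₗ V)
      Real.continuous_fourierChar continuous_inner J hg1)
  apply A.congr
  intro c
  congr with w
  rw [smul_eq_mul]
  congr 1
  simp

lemma integrable_fourier_of_nonneg {g : V → ℂ} (hg : Continuous g) (hg1 : Integrable g)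
    (hnn : ∀ ξ, 0 ≤ (𝓕 g ξ).re) (him : ∀ ξ, (𝓕 g ξ).im = 0) :
    Integrable (𝓕 g) := by
  have hcont : Continuous (𝓕 g) :=
    VectorFourier.fourierIntegral_continuous Real.continuous_fourierChar
      (by exact continuous_inner) hg1
  set G : V → ℝ := fun w ↦ (𝓕 g w).re with hG
  have hGcont : Continuous G := Complex.continuous_re.comp hcont
  have hnorm : ∀ w, ‖𝓕 g w‖ = G w := by
    intro w
    have h1 : 𝓕 g w = ((G w : ℝ) : ℂ) := Complex.ext rfl (him w)
    rw [h1, Complex.norm_real, Real.norm_eq_abs]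
    exact _root_.abs_of_nonneg (hnn w)
  have hGbd : ∀ w, G w ≤ ∫ v, ‖g v‖ := by
    intro w
    rw [← hnorm w]
    exact VectorFourier.norm_fourierIntegral_le_integral_norm _ _ _ _ _
  have hexp : ∀ (c : ℝ) (w : V), ‖cexp (- (c:ℂ)⁻¹ * (‖w‖:ℂ)^2)‖ = Real.exp (- c⁻¹ * ‖w‖^2) := by
    intro c w
    rw [show (- (c:ℂ)⁻¹ * (‖w‖:ℂ)^2) = (((- c⁻¹ * ‖w‖^2 : ℝ) : ℂ)) by push_cast; ring,
      ← Complex.ofReal_exp, Complex.norm_real, Real.norm_eq_abs, _root_.abs_of_pos (Real.exp_pos _)]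
  -- integrability of the damped integrands
  have hgaussC : ∀ {c : ℝ}, 0 < c → Integrable (fun w : V ↦ cexp (- (c:ℂ)⁻¹ * ‖w‖^2)) := by
    intro c hc
    have := GaussianFourier.integrable_cexp_neg_mul_sq_norm_add
      (b := (c:ℂ)⁻¹) (by simpa) 0 (0 : V)
    apply this.congr' ?_ (Eventually.of_forall fun w ↦ ?_)
    · exact (Continuous.aestronglyMeasurable (by fun_prop))
    · simp
  have hgaussR : ∀ {c : ℝ}, 0 < c → Integrable (fun w : V ↦ Real.exp (- c⁻¹ * ‖w‖^2)) := by
    intro c hc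
    apply (hgaussC hc).norm.congr (Eventually.of_forall fun w ↦ hexp c w)
  have hintC : ∀ {c : ℝ}, 0 < c → Integrable (fun w : V ↦ cexp (- (c:ℂ)⁻¹ * ‖w‖^2) * 𝓕 g w) := by
    intro c hc
    apply Integrable.mono' ((hgaussR hc).mul_const (∫ v, ‖g v‖))
    · exact (Continuous.aestronglyMeasurable (by fun_prop))
    · filter_upwards with w
      rw [norm_mul, hexp c w, hnorm w]
      gcongr
      exact hGbd w
  have hintR : ∀ {c : ℝ}, 0 < c → Integrable (fun w : V ↦ Real.exp (- c⁻¹ * ‖w‖^2) * G w) := by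
    intro c hc
    apply Integrable.mono' ((hgaussR hc).mul_const (∫ v, ‖g v‖))
    · exact (Continuous.aestronglyMeasurable (by fun_prop))
    · filter_upwards with w
      rw [norm_mul, Real.norm_eq_abs (Real.exp _), _root_.abs_of_pos (Real.exp_pos _),
        Real.norm_eq_abs, _root_.abs_of_nonneg (hnn w)]
      gcongr
      exact hGbd w
  -- real parts
  have hre : ∀ {c : ℝ}, 0 < c →
      (∫ w : V, cexp (- (c:ℂ)⁻¹ * ‖w‖^2) * 𝓕 g w).re
        = ∫ w : V, Real.exp (- c⁻¹ * ‖w‖^2) * G w := by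
    intro c hc
    have h2 := integral_re (hintC hc)
    rw [RCLike.re_eq_complex_re] at h2
    rw [← h2]
    congr with w
    rw [show (- (c:ℂ)⁻¹ * ((‖w‖:ℂ))^2) = (((- c⁻¹ * ‖w‖^2 : ℝ) : ℂ)) by push_cast; ring,
      ← Complex.ofReal_exp, Complex.re_ofReal_mul]
  -- limit of real integrals
  have hlim : Tendsto (fun c : ℝ ↦ ∫ w : V, Real.exp (- c⁻¹ * ‖w‖^2) * G w) atTop
      (𝓝 ((g 0).re)) := by
    have h0 := (Complex.continuous_re.tendsto _).comp (tendsto_gauss_mul_fourier hg hg1)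
    apply h0.congr'
    filter_upwards [Ioi_mem_atTop 0] with c (hc : 0 < c)
    exact hre hc
  have hseq : Tendsto (fun k : ℕ ↦ ∫ w : V, Real.exp (- ((k:ℝ)+1)⁻¹ * ‖w‖^2) * G w) atTop
      (𝓝 ((g 0).re)) :=
    hlim.comp (tendsto_atTop_add_const_right atTop 1 tendsto_natCast_atTop_atTop)
  -- monotone convergence
  have hmc := MeasureTheory.lintegral_tendsto_of_tendsto_of_monotone
    (f := fun (k : ℕ) (w : V) ↦ ENNReal.ofReal (Real.exp (- ((k:ℝ)+1)⁻¹ * ‖w‖^2) * G w))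
    (F := fun w : V ↦ ENNReal.ofReal (G w)) (μ := volume)
    (fun k ↦ (ENNReal.continuous_ofReal.comp (by fun_prop)).aemeasurable)
    (by
      filter_upwards with w
      intro k m hkm
      apply ENNReal.ofReal_le_ofReal
      apply mul_le_mul_of_nonneg_right _ (hnn w)
      apply Real.exp_le_exp.2
      rw [neg_mul, neg_mul, neg_le_neg_iff]
      apply mul_le_mul_of_nonneg_right _ (by positivity)
      apply inv_anti₀ (by positivity)
      have : (k:ℝ) ≤ m := Nat.cast_le.2 hkm
      linarith)
    (by
      filter_upwards with w
      have h1 : Tendsto (fun k : ℕ ↦ - ((k:ℝ)+1)⁻¹ * ‖w‖^2) atTop (𝓝 0) := by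
        have : Tendsto (fun k : ℕ ↦ ((k:ℝ)+1)⁻¹) atTop (𝓝 0) :=
          tendsto_inv_atTop_zero.comp
            (tendsto_atTop_add_const_right atTop 1 tendsto_natCast_atTop_atTop)
        simpa using (this.neg.mul_const (‖w‖^2))
      have h2 : Tendsto (fun k : ℕ ↦ Real.exp (- ((k:ℝ)+1)⁻¹ * ‖w‖^2) * G w) atTop
          (𝓝 (G w)) := by
        simpa using ((h1.rexp).mul_const (G w))
      exact (ENNReal.continuous_ofReal.tendsto _).comp h2)
  have heq : ∀ k : ℕ, (∫⁻ w : V, ENNReal.ofReal (Real.exp (- ((k:ℝ)+1)⁻¹ * ‖w‖^2) * G w))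
      = ENNReal.ofReal (∫ w : V, Real.exp (- ((k:ℝ)+1)⁻¹ * ‖w‖^2) * G w) := by
    intro k
    rw [MeasureTheory.ofReal_integral_eq_lintegral_ofReal (hintR (by positivity))]
    filter_upwards with w
    exact mul_nonneg (Real.exp_pos _).le (hnn w)
  have hmc2 : Tendsto (fun k : ℕ ↦ ENNReal.ofReal
      (∫ w : V, Real.exp (- ((k:ℝ)+1)⁻¹ * ‖w‖^2) * G w)) atTop
      (𝓝 (ENNReal.ofReal ((g 0).re))) :=
    (ENNReal.continuous_ofReal.tendsto _).comp hseq
  have hfin : (∫⁻ w : V, ENNReal.ofReal (G w)) = ENNReal.ofReal ((g 0).re) := by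
    apply tendsto_nhds_unique _ hmc2
    exact hmc.congr fun k ↦ (heq k)
  refine ⟨hcont.aestronglyMeasurable, ?_⟩
  rw [hasFiniteIntegral_iff_norm]
  have : ∀ w : V, ENNReal.ofReal ‖𝓕 g w‖ = ENNReal.ofReal (G w) := fun w ↦ by rw [hnorm w]
  simp_rw [this, hfin]
  exact ENNReal.ofReal_lt_top

lemma euclid_key {g : V → ℂ} (hg : Continuous g) (hg1 : Integrable g)
    (hnn : ∀ ξ, 0 ≤ (𝓕 g ξ).re) (him : ∀ ξ, (𝓕 g ξ).im = 0) :
    Integrable (𝓕 g) ∧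
      ∀ v : V, g v = ∫ w : V, cexp (((2 * π * ⟪w, v⟫ : ℝ) : ℂ) * I) * 𝓕 g w := by
  have hI := integrable_fourier_of_nonneg hg hg1 hnn him
  refine ⟨hI, fun v => ?_⟩
  have h1 := hg1.fourierInv_fourier_eq hI (v := v) hg.continuousAt
  rw [← h1, Real.fourierInv_eq']
  simp_rw [smul_eq_mul]
end BochnerAux

open MeasureTheory Complex Filter FourierTransform Real Module
open scoped Topology RealInnerProductSpace

/-- Integrable Bochner theorem on `ℝⁿ`: if `f : ℝⁿ → ℂ` is continuous and integrable
with Fourier transform `𝓕f(ξ) = ∫ e^{−i⟨ξ,x⟩} f(x) dx` nonnegative everywhere, then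
`f` is positive definite, `𝓕f ∈ L¹(ℝⁿ)` and
`f(x) = (2π)^{−n} ∫ e^{i⟨x,ξ⟩} 𝓕f(ξ) dξ` for every `x`. -/
theorem integrable_bochner_euclidean {n : ℕ} (f : (Fin n → ℝ) → ℂ)
    (hf : Continuous f) (hint : MeasureTheory.Integrable f)
    (F : (Fin n → ℝ) → ℂ)
    (hF : ∀ ξ : Fin n → ℝ, F ξ =
      ∫ x : Fin n → ℝ, Complex.exp (-((∑ i, ξ i * x i : ℝ) : ℂ) * Complex.I) * f x)
    (hFnn : ∀ ξ : Fin n → ℝ, 0 ≤ (F ξ).re ∧ (F ξ).im = 0) :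
    (∀ (N : ℕ) (v : Fin N → Fin n → ℝ) (c : Fin N → ℂ),
      0 ≤ (∑ i, ∑ j, f (v i - v j) * c i * (starRingEnd ℂ) (c j)).re ∧
      (∑ i, ∑ j, f (v i - v j) * c i * (starRingEnd ℂ) (c j)).im = 0) ∧
    MeasureTheory.Integrable F ∧
    ∀ x : Fin n → ℝ, f x = (((2 * Real.pi) ^ n : ℝ) : ℂ)⁻¹ *
      ∫ ξ : Fin n → ℝ, Complex.exp (((∑ i, x i * ξ i : ℝ) : ℂ) * Complex.I) * F ξ := by
  classical
  set e := (MeasurableEquiv.toLp 2 (Fin n → ℝ)).symm with he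
  have hvp : MeasurePreserving (⇑e) := EuclideanSpace.volume_preserving_symm_measurableEquiv_toLp (Fin n)
  have hvps : MeasurePreserving (⇑e.symm) := hvp.symm e
  have he_cont : Continuous (⇑e) := by
    rw [show ⇑e = ⇑(WithLp.equiv 2 (Fin n → ℝ)) from rfl]
    exact PiLp.continuous_ofLp _ _
  set g : EuclideanSpace ℝ (Fin n) → ℂ := fun x ↦ f (e x) with hgdef
  have hg : Continuous g := hf.comp he_cont
  have hg1 : Integrable g := by
    have := (hvp.integrable_comp_emb e.measurableEmbedding (g := f)).2 hint
    exact this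
  have happ : ∀ (w : EuclideanSpace ℝ (Fin n)) (i : Fin n), (e w) i = w i := fun _ _ => rfl
  have hsymm : ∀ (y : Fin n → ℝ) (i : Fin n), (e.symm y) i = y i := fun _ _ => rfl
  have hinner : ∀ (w ξ : EuclideanSpace ℝ (Fin n)), ⟪w, ξ⟫ = ∑ i, w i * ξ i := by
    intro w ξ
    simp [PiLp.inner_apply, RCLike.inner_apply]
    exact Finset.sum_congr rfl fun _ _ => mul_comm _ _
  have h2pi : (2 * π) ≠ 0 := by positivity
  -- the Fourier transform of g in terms of F
  have hFg : ∀ ξ : EuclideanSpace ℝ (Fin n), 𝓕 g ξ = F (fun i ↦ 2 * π * ξ i) := by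
    intro ξ
    rw [Real.fourier_eq', hF]
    rw [← hvp.integral_comp e.measurableEmbedding
      (fun x ↦ Complex.exp (-((∑ i, (2 * π * ξ i) * x i : ℝ) : ℂ) * Complex.I) * f x)]
    congr with w
    rw [smul_eq_mul]
    have hr : (-2 * π * ⟪w, ξ⟫ : ℝ) = -(∑ i, 2 * π * ξ i * (e w) i) := by
      rw [hinner w ξ]
      simp only [happ]
      rw [Finset.mul_sum, ← Finset.sum_neg_distrib]
      exact Finset.sum_congr rfl fun i _ ↦ by ring
    rw [hr, Complex.ofReal_neg, neg_mul]
  have hnn : ∀ ξ, 0 ≤ (𝓕 g ξ).re := fun ξ ↦ (hFg ξ) ▸ (hFnn _).1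
  have him : ∀ ξ, (𝓕 g ξ).im = 0 := fun ξ ↦ (hFg ξ) ▸ (hFnn _).2
  obtain ⟨hIg, hinv⟩ := euclid_key hg hg1 hnn him
  -- F in terms of 𝓕 g
  have hFcomp : ∀ y : Fin n → ℝ, F y = 𝓕 g ((2 * π)⁻¹ • e.symm y) := by
    intro y
    rw [hFg]
    congr 1
    funext i
    rw [show ((2 * π)⁻¹ • e.symm y) i = (2 * π)⁻¹ * (e.symm y) i from rfl, hsymm]
    field_simp
  have hFint : Integrable F := by
    have h1 : Integrable (fun v : EuclideanSpace ℝ (Fin n) ↦ 𝓕 g ((2 * π)⁻¹ • v)) :=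
      (integrable_comp_smul_iff volume (𝓕 g) (inv_ne_zero h2pi)).2 hIg
    have h2 : Integrable ((fun v : EuclideanSpace ℝ (Fin n) ↦ 𝓕 g ((2 * π)⁻¹ • v)) ∘ ⇑e.symm) :=
      (hvps.integrable_comp_emb e.symm.measurableEmbedding).2 h1
    exact h2.congr (Eventually.of_forall fun y ↦ (hFcomp y).symm)
  have hfinrank : finrank ℝ (EuclideanSpace ℝ (Fin n)) = n := finrank_euclideanSpace_fin
  -- inversion
  have hinv' : ∀ x : Fin n → ℝ, f x = (((2 * π) ^ n : ℝ) : ℂ)⁻¹ *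
      ∫ ξ : Fin n → ℝ, Complex.exp (((∑ i, x i * ξ i : ℝ) : ℂ) * Complex.I) * F ξ := by
    intro x
    have step1 : ∫ ξ : Fin n → ℝ, Complex.exp (((∑ i, x i * ξ i : ℝ) : ℂ) * Complex.I) * F ξ
        = ∫ w : EuclideanSpace ℝ (Fin n),
            Complex.exp (((∑ i, x i * w i : ℝ) : ℂ) * Complex.I) * 𝓕 g ((2 * π)⁻¹ • w) := by
      rw [← hvp.integral_comp e.measurableEmbedding
        (fun ξ ↦ Complex.exp (((∑ i, x i * ξ i : ℝ) : ℂ) * Complex.I) * F ξ)]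
      congr with w
      rw [hFcomp (e w), e.symm_apply_apply]
      congr 2
    have step2 : ∫ w : EuclideanSpace ℝ (Fin n),
          Complex.exp (((∑ i, x i * w i : ℝ) : ℂ) * Complex.I) * 𝓕 g ((2 * π)⁻¹ • w)
        = ((2 * π) ^ n : ℝ) • ∫ u : EuclideanSpace ℝ (Fin n),
            Complex.exp (((∑ i, x i * ((2 * π) • u) i : ℝ) : ℂ) * Complex.I) * 𝓕 g u := by
      set ψ : EuclideanSpace ℝ (Fin n) → ℂ := fun w ↦
        Complex.exp (((∑ i, x i * w i : ℝ) : ℂ) * Complex.I) * 𝓕 g ((2 * π)⁻¹ • w) with hψdef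
      have hψ : ∀ u : EuclideanSpace ℝ (Fin n),
          Complex.exp (((∑ i, x i * ((2 * π) • u) i : ℝ) : ℂ) * Complex.I) * 𝓕 g u
            = ψ ((2 * π) • u) := by
        intro u
        rw [hψdef]
        simp only []
        rw [smul_smul, inv_mul_cancel₀ h2pi, one_smul]
      simp_rw [hψ]
      rw [MeasureTheory.Measure.integral_comp_smul volume ψ (2 * π), hfinrank, smul_smul,
        _root_.abs_of_pos (by positivity : (0:ℝ) < ((2 * π) ^ n)⁻¹),
        mul_inv_cancel₀ (by positivity : ((2 * π : ℝ)) ^ n ≠ 0), one_smul]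
    have step3 : ∫ u : EuclideanSpace ℝ (Fin n),
          Complex.exp (((∑ i, x i * ((2 * π) • u) i : ℝ) : ℂ) * Complex.I) * 𝓕 g u
        = f x := by
      have hx := hinv (e.symm x)
      have hgx : g (e.symm x) = f x := by
        show f (e (e.symm x)) = f x
        rw [e.apply_symm_apply]
      rw [← hgx, hx]
      congr with u
      congr 2
      rw [hinner u (e.symm x)]
      congr 1
      push_cast
      rw [Finset.mul_sum]
      apply Finset.sum_congr rfl
      intro i _
      rw [show ((2 * π) • u) i = 2 * π * u i from rfl, hsymm]
      push_cast
      ring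
    rw [step1, step2, step3]
    rw [Complex.real_smul]
    have hne : ((2 * π : ℝ) : ℂ) ^ n ≠ 0 := pow_ne_zero _ (Complex.ofReal_ne_zero.mpr h2pi)
    push_cast
    push_cast at hne
    rw [← mul_assoc, inv_mul_cancel₀ hne, one_mul]
  refine ⟨?_, hFint, hinv'⟩
  intro N v c
  set S : (Fin n → ℝ) → ℂ := fun ξ ↦ ∑ i, c i * cexp (((∑ k, v i k * ξ k : ℝ) : ℂ) * I)
    with hSdef
  have hIij : ∀ (a : Fin n → ℝ) (z : ℂ),
      Integrable (fun ξ : Fin n → ℝ ↦ cexp (((∑ k, a k * ξ k : ℝ) : ℂ) * I) * F ξ * z) := by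
    intro a z
    apply Integrable.mul_const
    apply hFint.bdd_mul (c := 1)
    · apply Continuous.aestronglyMeasurable
      fun_prop
    · exact Eventually.of_forall fun ξ ↦ le_of_eq (Complex.norm_exp_ofReal_mul_I _)
  have hterm : ∀ (i j : Fin N),
      f (v i - v j) * c i * (starRingEnd ℂ) (c j)
        = (((2 * π) ^ n : ℝ) : ℂ)⁻¹ * ∫ ξ : Fin n → ℝ,
            cexp (((∑ k, (v i - v j) k * ξ k : ℝ) : ℂ) * I) * F ξ * (c i * (starRingEnd ℂ) (c j)) := by
    intro i j
    rw [hinv' (v i - v j), MeasureTheory.integral_mul_const]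
    ring
  have hQ : (∑ i, ∑ j, f (v i - v j) * c i * (starRingEnd ℂ) (c j))
      = (((2 * π) ^ n : ℝ) : ℂ)⁻¹ * ∫ ξ : Fin n → ℝ,
          ((Complex.normSq (S ξ) * (F ξ).re : ℝ) : ℂ) := by
    simp_rw [hterm, ← Finset.mul_sum]
    congr 1
    have e1 : (∑ i, ∑ j, ∫ ξ : Fin n → ℝ,
          cexp (((∑ k, (v i - v j) k * ξ k : ℝ) : ℂ) * I) * F ξ * (c i * (starRingEnd ℂ) (c j)))
        = ∑ i, ∫ ξ : Fin n → ℝ, ∑ j,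
          cexp (((∑ k, (v i - v j) k * ξ k : ℝ) : ℂ) * I) * F ξ * (c i * (starRingEnd ℂ) (c j)) :=
      Finset.sum_congr rfl fun i _ ↦
        (MeasureTheory.integral_finset_sum _ (fun j _ ↦ hIij _ _)).symm
    rw [e1, ← MeasureTheory.integral_finset_sum _ (fun i _ ↦
      MeasureTheory.integrable_finset_sum _ (fun j _ ↦ hIij _ _))]
    congr with ξ
    have hsum : ∀ i j : Fin N,
        cexp (((∑ k, (v i - v j) k * ξ k : ℝ) : ℂ) * I)
          = cexp (((∑ k, v i k * ξ k : ℝ) : ℂ) * I) *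
            cexp (-((∑ k, v j k * ξ k : ℝ) : ℂ) * I) := by
      intro i j
      rw [← Complex.exp_add]
      congr 1
      have hsub : (∑ k, (v i - v j) k * ξ k : ℝ)
          = (∑ k, v i k * ξ k) - (∑ k, v j k * ξ k) := by
        rw [← Finset.sum_sub_distrib]
        exact Finset.sum_congr rfl fun k _ ↦ by simp only [Pi.sub_apply]; ring
      rw [hsub]
      push_cast
      ring
    have hSconj : S ξ * (starRingEnd ℂ) (S ξ)
        = ∑ i, ∑ j, cexp (((∑ k, (v i - v j) k * ξ k : ℝ) : ℂ) * I)
            * (c i * (starRingEnd ℂ) (c j)) := by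
      rw [hSdef]
      simp only [map_sum, map_mul]
      rw [Finset.sum_mul_sum]
      apply Finset.sum_congr rfl
      intro i _
      apply Finset.sum_congr rfl
      intro j _
      have hcj : (starRingEnd ℂ) (cexp (((∑ k, v j k * ξ k : ℝ) : ℂ) * I))
          = cexp (-((∑ k, v j k * ξ k : ℝ) : ℂ) * I) := by
        rw [← Complex.exp_conj]
        congr 1
        rw [map_mul, Complex.conj_I, Complex.conj_ofReal]
        ring
      rw [hcj, hsum i j]
      ring
    have hFre : F ξ = (((F ξ).re : ℝ) : ℂ) := Complex.ext rfl (hFnn ξ).2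
    have h2 : ((Complex.normSq (S ξ) : ℝ) : ℂ) * (((F ξ).re : ℝ) : ℂ)
        = (S ξ * (starRingEnd ℂ) (S ξ)) * F ξ := by
      rw [Complex.mul_conj, ← hFre]
    rw [Complex.ofReal_mul, h2, hSconj, Finset.sum_mul]
    exact Finset.sum_congr rfl fun i _ ↦ by
      rw [Finset.sum_mul]
      exact Finset.sum_congr rfl fun j _ ↦ by ring
  have hR : (0:ℝ) ≤ ∫ ξ : Fin n → ℝ, Complex.normSq (S ξ) * (F ξ).re :=
    MeasureTheory.integral_nonneg fun ξ ↦ mul_nonneg (Complex.normSq_nonneg _) (hFnn ξ).1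
  have hcoe : (∫ ξ : Fin n → ℝ, ((Complex.normSq (S ξ) * (F ξ).re : ℝ) : ℂ))
      = (((∫ ξ : Fin n → ℝ, Complex.normSq (S ξ) * (F ξ).re) : ℝ) : ℂ) := by
    rw [show (Complex.ofReal : ℝ → ℂ) = ((RCLike.ofReal : ℝ → ℂ)) from rfl]
    exact integral_ofReal
  rw [hQ, hcoe, ← Complex.ofReal_inv, ← Complex.ofReal_mul]
  constructor
  · rw [Complex.ofReal_re]
    exact mul_nonneg (inv_nonneg.2 (by positivity)) hR
  · exact Complex.ofReal_im _
end

section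
/- Let ρ : [0,∞) → ℝ be given by ρ(θ) = ∫_0^∞ exp(−aθ) dμ(a) for a probability measure μ on [0,∞). Then the function x ↦ ρ(Arccos x) on [−1,1] can be written as ∑_{n=0}^∞ (c_n/n!) x^n with c_n = ∫_0^∞ e^{−aπ/2} r_n(a) dμ(a) ≥ 0 and ∑_n c_n/n! = ρ(0) < ∞, where r_n satisfies the recursion r_0 = 1, r_{n+1}(a) = a·∑_{k=0}^{⌊n/2⌋} binom(n,2k)·r_{n−2k}(a)·((2k−1)!!)². -/
open Real Filter MeasureTheory Finset Topology

namespace CMSE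
noncomputable section

/-- odd double factorial -/
def df (k : ℕ) : ℕ := ∏ i ∈ Finset.range k, (2*i+1)

lemma df_succ (k : ℕ) : df (k+1) = df k * (2*k+1) := Finset.prod_range_succ _ _

lemma df_mul (k : ℕ) : df k * (2^k * k.factorial) = (2*k).factorial := by
  induction k with
  | zero => simp [df]
  | succ k ih =>
    have e : (2*(k+1)).factorial = ((2*k+1)+1)*((2*k+1)*(2*k).factorial) := by
      have h2 : 2*(k+1) = (2*k+1)+1 := by ring
      rw [h2, Nat.factorial_succ, Nat.factorial_succ]
    rw [df_succ, e, ← ih, Nat.factorial_succ, pow_succ]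
    ring

/-- normalized squared double factorial -/
def ck (k : ℕ) : ℝ := (df k : ℝ)^2 / (2*k).factorial

lemma ck_nonneg (k : ℕ) : 0 ≤ ck k := by
  apply div_nonneg (by positivity) (by positivity)

lemma ck_zero : ck 0 = 1 := by simp [ck, df]

lemma df_le (k : ℕ) : df k ≤ 2^k * k.factorial := by
  calc df k = ∏ i ∈ Finset.range k, (2*i+1) := rfl
    _ ≤ ∏ i ∈ Finset.range k, (2*(i+1)) := by
        apply Finset.prod_le_prod' (fun i _ => by omega)
    _ = 2^k * k.factorial := by
        induction k with
        | zero => simp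
        | succ k ih =>
          rw [Finset.prod_range_succ, ih, Nat.factorial_succ, pow_succ]
          ring

lemma ck_le_one (k : ℕ) : ck k ≤ 1 := by
  rw [ck, div_le_one (by positivity)]
  have h := df_mul k
  have h2 := df_le k
  have h2' : (df k : ℝ) ≤ (2:ℝ)^k * k.factorial := by exact_mod_cast h2
  have h' : (df k : ℝ) * ((2:ℝ)^k * k.factorial) = ((2*k).factorial : ℝ) := by
    exact_mod_cast congrArg (Nat.cast (R := ℝ)) h
  nlinarith [Nat.cast_nonneg (α := ℝ) (df k), Nat.cast_nonneg (α := ℝ) ((2*k).factorial)]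

lemma ck_succ (k : ℕ) : (2*(k:ℝ)+2) * ck (k+1) = (2*(k:ℝ)+1) * ck k := by
  have hfac : ((2*(k+1)).factorial : ℝ) = (2*k+2) * ((2*k+1) * (2*k).factorial) := by
    have : 2*(k+1) = (2*k+1)+1 := by ring
    rw [this, Nat.factorial_succ, Nat.factorial_succ]
    push_cast; ring
  have hdf : ((df (k+1) : ℕ) : ℝ) = (df k : ℝ) * (2*k+1) := by
    rw [df_succ]; push_cast; ring
  rw [ck, ck, hfac, hdf]
  have h1 : ((2*k).factorial : ℝ) ≠ 0 := by positivity
  field_simp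

/-- coefficients of (1-x^2)^{-1/2} -/
def d (m : ℕ) : ℝ := if m % 2 = 0 then ck (m/2) else 0

lemma d_nonneg (m : ℕ) : 0 ≤ d m := by
  unfold d; split <;> simp [ck_nonneg]

lemma d_le_one (m : ℕ) : d m ≤ 1 := by
  unfold d; split
  · exact ck_le_one _
  · norm_num

lemma d_zero : d 0 = 1 := by simp [d, ck_zero]

lemma d_one : d 1 = 0 := by simp [d]

lemma d_rec (m : ℕ) : ((m:ℝ)+2) * d (m+2) = ((m:ℝ)+1) * d m := by
  rcases Nat.even_or_odd m with ⟨k, hk⟩ | ⟨k, hk⟩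
  · subst hk
    have h1 : (k+k) % 2 = 0 := by omega
    have h2 : (k+k+2) % 2 = 0 := by omega
    have h3 : (k+k)/2 = k := by omega
    have h4 : (k+k+2)/2 = k+1 := by omega
    simp only [d, h1, h2, h3, h4, if_true]
    have := ck_succ k
    push_cast
    push_cast at this
    linarith
  · subst hk
    have h1 : (2*k+1) % 2 = 1 := by omega
    have h2 : (2*k+1+2) % 2 = 1 := by omega
    simp [d, h1, h2]

lemma sum_even (F : ℕ → ℝ) (n : ℕ) :
    ∑ j ∈ Finset.range (n+1), (if j % 2 = 0 then F j else 0)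
      = ∑ k ∈ Finset.range (n/2+1), F (2*k) := by
  induction n with
  | zero => simp
  | succ n ih =>
    rw [Finset.sum_range_succ, ih]
    rcases Nat.even_or_odd (n+1) with ⟨k, hk⟩ | ⟨k, hk⟩
    · have h1 : (n+1) % 2 = 0 := by omega
      have h2 : (n+1)/2 = n/2 + 1 := by omega
      have h3 : 2 * (n/2+1) = n+1 := by omega
      have e : ∑ k ∈ Finset.range (n/2+1+1), F (2*k)
          = (∑ k ∈ Finset.range (n/2+1), F (2*k)) + F (2*(n/2+1)) :=
        Finset.sum_range_succ _ _
      rw [h2, e, h3]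
      simp [h1]
    · have h1 : (n+1) % 2 = 1 := by omega
      have h2 : (n+1)/2 = n/2 := by omega
      simp [h1, h2]

end
end CMSE
section Part2
namespace CMSE
open Real Filter MeasureTheory Finset Topology

variable (r : ℕ → ℝ → ℝ)

/-- normalized coefficients -/
noncomputable def pp (n : ℕ) (a : ℝ) : ℝ := r n a / n.factorial

/-- growth majorant -/
noncomputable def qq (a : ℝ) (n : ℕ) : ℝ := ∏ j ∈ Finset.range n, (1 + a/(j+1))

lemma qq_zero (a : ℝ) : qq a 0 = 1 := by simp [qq]

lemma qq_succ (a : ℝ) (n : ℕ) : qq a (n+1) = qq a n * (1 + a/(n+1)) :=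
  Finset.prod_range_succ _ _

lemma one_le_qq {a : ℝ} (ha : 0 ≤ a) (n : ℕ) : 1 ≤ qq a n := by
  induction n with
  | zero => simp [qq]
  | succ n ih =>
    rw [qq_succ]
    have h : 0 ≤ a/((n:ℝ)+1) := by positivity
    nlinarith

lemma qq_pos {a : ℝ} (ha : 0 ≤ a) (n : ℕ) : 0 < qq a n :=
  lt_of_lt_of_le one_pos (one_le_qq ha n)

lemma qq_succ' (a : ℝ) (n : ℕ) : ((n:ℝ)+1) * qq a (n+1) = ((n:ℝ)+1+a) * qq a n := by
  rw [qq_succ]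
  have hne : ((n:ℝ)+1) ≠ 0 := by positivity
  field_simp

lemma summable_qq_mul (a t : ℝ) (ha : 0 ≤ a) (ht0 : 0 < t) (ht1 : t < 1) :
    Summable (fun n => qq a n * ((n:ℝ) * t^(n-1))) := by
  set ρ : ℝ := (1+t)/2 with hρ
  have hρ1 : ρ < 1 := by rw [hρ]; linarith
  have hρt : t < ρ := by rw [hρ]; linarith
  apply summable_of_ratio_norm_eventually_le hρ1
  obtain ⟨N₀, hN₀⟩ := exists_nat_ge ((1+a)*t/(ρ-t))
  filter_upwards [eventually_ge_atTop (N₀+1)] with n hn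
  obtain ⟨m, rfl⟩ : ∃ m, n = m + 1 := ⟨n-1, by omega⟩
  have hq : (0:ℝ) < qq a (m+1) := qq_pos ha _
  have hq2 : (0:ℝ) < qq a (m+1+1) := qq_pos ha _
  have hnN : (N₀:ℝ) ≤ (m:ℝ)+1 := by exact_mod_cast Nat.cast_le.mpr (by omega : N₀ ≤ m+1)
  have key : (((m:ℝ)+1)+1+a) * t ≤ ρ * ((m:ℝ)+1) := by
    rw [div_le_iff₀ (by linarith)] at hN₀
    nlinarith
  have hqs : (((m:ℝ)+1)+1) * qq a (m+1+1) = (((m:ℝ)+1)+1+a) * qq a (m+1) := by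
    have h := qq_succ' a (m+1)
    push_cast at h
    linear_combination h
  have hnn1 : (0:ℝ) ≤ qq a (m+1+1) * ((((m+1+1):ℕ):ℝ) * t^((m+1+1)-1)) := by positivity
  have hnn2 : (0:ℝ) ≤ qq a (m+1) * ((((m+1):ℕ):ℝ) * t^((m+1)-1)) := by positivity
  rw [Real.norm_of_nonneg hnn2, Real.norm_of_nonneg hnn1]
  simp only [Nat.add_sub_cancel]
  push_cast
  have key2 : ((((m:ℝ)+1)+1+a)*t) * (qq a (m+1) * t^m)
      ≤ (ρ*((m:ℝ)+1)) * (qq a (m+1) * t^m) :=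
    mul_le_mul_of_nonneg_right key (by positivity)
  calc qq a (m+1+1) * (((m:ℝ)+1+1) * t^(m+1))
      = ((((m:ℝ)+1)+1) * qq a (m+1+1)) * t^(m+1) := by ring
    _ = ((((m:ℝ)+1)+1+a) * qq a (m+1)) * t^(m+1) := by rw [hqs]
    _ = ((((m:ℝ)+1)+1+a)*t) * (qq a (m+1) * t^m) := by rw [pow_succ]; ring
    _ ≤ (ρ*((m:ℝ)+1)) * (qq a (m+1) * t^m) := key2
    _ = ρ * (qq a (m+1) * (((m:ℝ)+1) * t^m)) := by ring

/-- generic termwise differentiation of a power series with nonneg coefficients -/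
lemma hasDerivAt_series (co : ℕ → ℝ) (hco : ∀ n, 0 ≤ co n) {t₀ x : ℝ} (hx : |x| < t₀)
    (hsum : Summable (fun n => co n * ((n:ℝ) * t₀^(n-1)))) :
    HasDerivAt (fun y => ∑' n, co n * y^n) (∑' n, co n * ((n:ℝ) * x^(n-1))) x := by
  have ht₀ : 0 < t₀ := lt_of_le_of_lt (abs_nonneg x) hx
  refine hasDerivAt_tsum_of_isPreconnected hsum (isOpen_Ioo (a := -t₀) (b := t₀))
    ((convex_Ioo _ _).isPreconnected)
    (fun n y _ => (hasDerivAt_pow n y).const_mul (co n))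
    (fun n y hy => ?_) (y₀ := 0) ⟨by linarith, ht₀⟩
    ?_ (by rwa [Set.mem_Ioo, ← abs_lt])
  · have hyt : |y| ≤ t₀ := by
      rw [Set.mem_Ioo] at hy
      rw [abs_le]; constructor <;> linarith
    rw [Real.norm_eq_abs, abs_mul, abs_mul, abs_of_nonneg (hco n), Nat.abs_cast]
    have : |y^(n-1)| ≤ t₀^(n-1) := by
      rw [abs_pow]
      exact pow_le_pow_left₀ (abs_nonneg _) hyt _
    have h0 : (0:ℝ) ≤ co n * n := mul_nonneg (hco n) (Nat.cast_nonneg n)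
    calc co n * ((n:ℝ) * |y ^ (n-1)|) = (co n * n) * |y^(n-1)| := by ring
      _ ≤ (co n * n) * t₀^(n-1) := mul_le_mul_of_nonneg_left this h0
      _ = co n * ((n:ℝ) * t₀^(n-1)) := by ring
  · apply summable_of_ne_finset_zero (s := {0})
    intro n hn
    simp only [Finset.mem_singleton] at hn
    rw [zero_pow hn, mul_zero]

end CMSE
end Part2
section Part3
namespace CMSE
open Real Filter MeasureTheory Finset Topology

variable {r : ℕ → ℝ → ℝ}

def Hrec (r : ℕ → ℝ → ℝ) : Prop :=
  (∀ a : ℝ, r 0 a = 1) ∧ ∀ (n : ℕ) (a : ℝ), r (n + 1) a = a *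
      ∑ k ∈ Finset.range (n / 2 + 1),
        (Nat.choose n (2 * k) : ℝ) * r (n - 2 * k) a *
          (((∏ i ∈ Finset.range k, (2 * i + 1) : ℕ)) : ℝ) ^ 2

lemma r_nonneg (hr : Hrec r) : ∀ (n : ℕ) (a : ℝ), 0 ≤ a → 0 ≤ r n a := by
  intro n
  induction n using Nat.strong_induction_on with
  | _ n ih =>
    intro a ha
    match n with
    | 0 => rw [hr.1]; norm_num
    | Nat.succ n =>
      rw [hr.2]
      apply mul_nonneg ha
      apply Finset.sum_nonneg
      intro k _
      have h1 : 0 ≤ r (n - 2*k) a := ih (n - 2*k) (by omega) a ha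
      positivity

lemma r_measurable (hr : Hrec r) : ∀ n : ℕ, Measurable (r n) := by
  intro n
  induction n using Nat.strong_induction_on with
  | _ n ih =>
    match n with
    | 0 =>
      have : r 0 = fun _ => (1:ℝ) := funext hr.1
      rw [this]; exact measurable_const
    | Nat.succ n =>
      have : r (n+1) = fun a => a * ∑ k ∈ Finset.range (n / 2 + 1),
          (Nat.choose n (2 * k) : ℝ) * r (n - 2 * k) a *
          (((∏ i ∈ Finset.range k, (2 * i + 1) : ℕ)) : ℝ) ^ 2 := funext (hr.2 n)
      rw [this]
      apply Measurable.mul measurable_id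
      apply Finset.measurable_sum
      intro k _
      exact (((ih (n - 2*k) (by omega)).const_mul _).mul measurable_const)

lemma pp_zero (hr : Hrec r) (a : ℝ) : pp r 0 a = 1 := by
  simp [pp, hr.1]

lemma pp_nonneg (hr : Hrec r) (n : ℕ) {a : ℝ} (ha : 0 ≤ a) : 0 ≤ pp r n a := by
  have := r_nonneg hr n a ha
  unfold pp
  positivity

lemma pp_rec (hr : Hrec r) (n : ℕ) (a : ℝ) :
    ((n:ℝ)+1) * pp r (n+1) a
      = a * ∑ k ∈ Finset.range (n/2+1), pp r (n-2*k) a * ck k := by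
  have hfac : (((n+1).factorial : ℕ) : ℝ) = ((n:ℝ)+1) * (n.factorial : ℝ) := by
    rw [Nat.factorial_succ]; push_cast; ring
  have hterm : ∀ k ∈ Finset.range (n/2+1),
      (Nat.choose n (2 * k) : ℝ) * r (n - 2 * k) a * ((df k : ℕ) : ℝ) ^ 2 / n.factorial
        = pp r (n-2*k) a * ck k := by
    intro k hk
    rw [Finset.mem_range] at hk
    have h2k : 2*k ≤ n := by omega
    have hnat : ((n.choose (2*k) * (2*k).factorial * (n - 2*k).factorial : ℕ) : ℝ)
        = (n.factorial : ℝ) :=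
      congrArg _ (Nat.choose_mul_factorial_mul_factorial h2k)
    push_cast at hnat
    unfold pp ck
    have f1 : ((n.factorial : ℕ) : ℝ) ≠ 0 := by positivity
    have f2 : (((n-2*k).factorial : ℕ) : ℝ) ≠ 0 := by positivity
    have f3 : (((2*k).factorial : ℕ) : ℝ) ≠ 0 := by positivity
    field_simp
    linear_combination (r (n-2*k) a * ((df k : ℕ):ℝ)^2) * hnat
  rw [← Finset.sum_congr rfl hterm]
  unfold pp
  rw [hr.2, hfac]
  unfold df
  rw [← Finset.sum_div]
  have f1 : ((n.factorial : ℕ) : ℝ) ≠ 0 := by positivity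
  have f2 : ((n:ℝ)+1) ≠ 0 := by positivity
  field_simp

lemma sum_pp_le (hr : Hrec r) {a : ℝ} (ha : 0 ≤ a) :
    ∀ n : ℕ, ∑ j ∈ Finset.range (n+1), pp r j a ≤ qq a n := by
  intro n
  induction n with
  | zero => simp [pp_zero hr, qq_zero]
  | succ n ih =>
    rw [Finset.sum_range_succ, qq_succ]
    have key : pp r (n+1) a ≤ a/((n:ℝ)+1) * ∑ j ∈ Finset.range (n+1), pp r j a := by
      have hrec := pp_rec hr n a
      have step1 : ∑ k ∈ Finset.range (n/2+1), pp r (n-2*k) a * ck k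
          ≤ ∑ k ∈ Finset.range (n/2+1), pp r (n-2*k) a := by
        apply Finset.sum_le_sum
        intro k _
        have h1 := pp_nonneg hr (n-2*k) ha
        nlinarith [ck_le_one k, ck_nonneg k]
      have step2 : ∑ k ∈ Finset.range (n/2+1), pp r (n-2*k) a
          ≤ ∑ j ∈ Finset.range (n+1), pp r j a := by
        have himg := Finset.sum_image (f := fun j => pp r j a)
          (s := Finset.range (n/2+1)) (g := fun k => n - 2*k)
          (fun x hx y hy hxy => by
            simp only [Finset.coe_range, Set.mem_Iio, Finset.mem_coe, Finset.mem_range] at hx hy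
            dsimp only at hxy
            omega)
        rw [← himg]
        apply Finset.sum_le_sum_of_subset_of_nonneg
        · intro j hj
          simp only [Finset.mem_image, Finset.mem_range] at hj ⊢
          obtain ⟨k, hk, rfl⟩ := hj
          omega
        · intro j _ _
          exact pp_nonneg hr j ha
      have hn1 : (0:ℝ) < (n:ℝ)+1 := by positivity
      rw [div_mul_eq_mul_div, le_div_iff₀ hn1]
      calc pp r (n+1) a * ((n:ℝ)+1) = ((n:ℝ)+1) * pp r (n+1) a := by ring
        _ = a * ∑ k ∈ Finset.range (n/2+1), pp r (n-2*k) a * ck k := hrec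
        _ ≤ a * ∑ j ∈ Finset.range (n+1), pp r j a := by
            apply mul_le_mul_of_nonneg_left (le_trans step1 step2) ha
    have hS : 0 ≤ ∑ j ∈ Finset.range (n+1), pp r j a :=
      Finset.sum_nonneg fun j _ => pp_nonneg hr j ha
    have h2 : a/((n:ℝ)+1) * ∑ j ∈ Finset.range (n+1), pp r j a ≤ a/((n:ℝ)+1) * qq a n := by
      apply mul_le_mul_of_nonneg_left ih (by positivity)
    have hq := qq_pos ha n
    calc ∑ j ∈ Finset.range (n+1), pp r j a + pp r (n+1) a
        ≤ qq a n + a/((n:ℝ)+1) * qq a n := by linarith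
      _ = qq a n * (1 + a/((n:ℝ)+1)) := by ring

lemma pp_le_qq (hr : Hrec r) {a : ℝ} (ha : 0 ≤ a) (n : ℕ) : pp r n a ≤ qq a n := by
  have h := sum_pp_le hr ha n
  have : pp r n a ≤ ∑ j ∈ Finset.range (n+1), pp r j a := by
    apply Finset.single_le_sum (fun j _ => pp_nonneg hr j ha)
    simp
  linarith

lemma summable_pp_pow (hr : Hrec r) {a t : ℝ} (ha : 0 ≤ a) (ht0 : 0 ≤ t) (ht1 : t < 1) :
    Summable (fun n => pp r n a * t^n) := by
  set t₀ : ℝ := (t+1)/2 with ht₀def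
  have ht₀0 : 0 < t₀ := by rw [ht₀def]; linarith
  have ht₀1 : t₀ < 1 := by rw [ht₀def]; linarith
  have htt₀ : t ≤ t₀ := by rw [ht₀def]; linarith
  apply Summable.of_norm_bounded_eventually_nat (summable_qq_mul a t₀ ha ht₀0 ht₀1)
  filter_upwards [eventually_ge_atTop 1] with n hn
  obtain ⟨m, rfl⟩ : ∃ m, n = m + 1 := ⟨n-1, by omega⟩
  set n := m + 1 with hndef
  have h1 : 0 ≤ pp r n a := pp_nonneg hr n ha
  have h2 : (0:ℝ) ≤ t^n := by positivity
  rw [Real.norm_eq_abs, abs_of_nonneg (by positivity)]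
  have hsub : n - 1 = m := by omega
  have e1 : t^n ≤ t₀^(n-1) := by
    rw [hsub]
    calc t^n ≤ t₀^n := pow_le_pow_left₀ ht0 htt₀ n
      _ = t₀^m * t₀ := by rw [hndef, pow_succ]
      _ ≤ t₀^m := by nlinarith [pow_nonneg (le_of_lt ht₀0) m]
  have hcast : (1:ℝ) ≤ (n:ℝ) := by exact_mod_cast hn
  have e2 : t₀^(n-1) ≤ (n:ℝ) * t₀^(n-1) := by
    nlinarith [pow_nonneg (le_of_lt ht₀0) (n-1)]
  calc pp r n a * t^n ≤ qq a n * t^n := by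
        apply mul_le_mul_of_nonneg_right (pp_le_qq hr ha n) h2
    _ ≤ qq a n * ((n:ℝ) * t₀^(n-1)) := by
        apply mul_le_mul_of_nonneg_left (le_trans e1 e2) (le_of_lt (qq_pos ha n))

end CMSE
end Part3
section Part4
namespace CMSE
open Real Filter MeasureTheory Finset Topology

lemma hasSum_shift {f : ℕ → ℝ} {S : ℝ} (h : HasSum f S) (h0 : f 0 = 0) :
    HasSum (fun n => f (n+1)) S := by
  refine (hasSum_nat_add_iff 1).mpr ?_
  simpa [h0] using h

lemma hasSum_unshift {f : ℕ → ℝ} {S : ℝ} (h : HasSum (fun n => f (n+1)) S) (h0 : f 0 = 0) :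
    HasSum f S := by
  have := (hasSum_nat_add_iff (f := f) 1).mp h
  simpa [h0] using this

noncomputable def hfun (x : ℝ) : ℝ := ∑' m, d m * x^m

lemma qq_zero_left (n : ℕ) : qq 0 n = 1 := by unfold qq; simp

lemma summable_d_deriv {x t₀ : ℝ} (hx : |x| ≤ t₀) (ht0 : 0 < t₀) (ht1 : t₀ < 1) :
    Summable (fun m => d m * ((m:ℝ) * x^(m-1))) := by
  apply Summable.of_norm_bounded (summable_qq_mul 0 t₀ le_rfl ht0 ht1)
  intro m
  rw [Real.norm_eq_abs, abs_mul, abs_mul, abs_of_nonneg (d_nonneg m), Nat.abs_cast, qq_zero_left]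
  have h1 : |x^(m-1)| ≤ t₀^(m-1) := by
    rw [abs_pow]
    exact pow_le_pow_left₀ (abs_nonneg _) hx _
  have hm : (0:ℝ) ≤ (m:ℝ) := Nat.cast_nonneg m
  have habs : (0:ℝ) ≤ |x^(m-1)| := abs_nonneg _
  calc d m * ((m:ℝ) * |x^(m-1)|) ≤ 1 * ((m:ℝ) * |x^(m-1)|) :=
        mul_le_mul_of_nonneg_right (d_le_one m) (by positivity)
    _ ≤ 1 * ((m:ℝ) * t₀^(m-1)) := by
        have := mul_le_mul_of_nonneg_left h1 hm
        linarith

lemma summable_d_pow {x : ℝ} (hx : |x| < 1) : Summable (fun m => d m * x^m) := by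
  apply Summable.of_norm_bounded (summable_geometric_of_lt_one (abs_nonneg x) hx)
  intro m
  rw [Real.norm_eq_abs, abs_mul, abs_of_nonneg (d_nonneg m), abs_pow]
  nlinarith [d_le_one m, d_nonneg m, pow_nonneg (abs_nonneg x) m]

lemma hasSum_hfun {x : ℝ} (hx : |x| < 1) : HasSum (fun m => d m * x^m) (hfun x) :=
  (summable_d_pow hx).hasSum

lemma d_term_nonneg (m : ℕ) (x : ℝ) : 0 ≤ d m * x^m := by
  unfold d
  split
  · rename_i h
    have hev : Even m := Nat.even_iff.mpr h
    exact mul_nonneg (ck_nonneg _) (hev.pow_nonneg x)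
  · simp

lemma one_le_hfun {x : ℝ} (hx : |x| < 1) : 1 ≤ hfun x := by
  have h := hasSum_hfun hx
  have := le_hasSum h 0 (fun j _ => d_term_nonneg j x)
  simpa [d_zero] using this

noncomputable def Dh (x : ℝ) : ℝ := ∑' m, d m * ((m:ℝ) * x^(m-1))

lemma half_lt_one {x : ℝ} (hx : |x| < 1) : (|x|+1)/2 < 1 := by linarith

lemma half_pos' {x : ℝ} : 0 < (|x|+1)/2 := by linarith [abs_nonneg x]

lemma le_half {x : ℝ} (hx : |x| < 1) : |x| ≤ (|x|+1)/2 := by linarith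

lemma hasSum_congr' {f g : ℕ → ℝ} {S : ℝ} (h : HasSum f S) (e : ∀ n, f n = g n) :
    HasSum g S := by
  rwa [show g = f from funext fun n => (e n).symm]

lemma hfun_hasDerivAt {x : ℝ} (hx : |x| < 1) : HasDerivAt hfun (Dh x) x :=
  hasDerivAt_series d d_nonneg (t₀ := (|x|+1)/2) (by linarith)
    (summable_d_deriv (x := (|x|+1)/2)
      (le_of_eq (abs_of_nonneg (le_of_lt half_pos'))) half_pos' (half_lt_one hx))

lemma Dh_eq {x : ℝ} (hx : |x| < 1) : Dh x * (1 - x^2) = x * hfun x := by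
  have HD : HasSum (fun m => d m * ((m:ℝ) * x^(m-1))) (Dh x) :=
    (summable_d_deriv (le_half hx) half_pos' (half_lt_one hx)).hasSum
  have HD1 : HasSum (fun (m:ℕ) => ((m:ℝ)+1) * d (m+1) * x^m) (Dh x) := by
    refine hasSum_congr' (hasSum_shift HD (by norm_num)) (fun m => ?_)
    push_cast [Nat.add_sub_cancel]
    ring
  have HD2 : HasSum (fun (m:ℕ) => ((m:ℝ)+1) * d m * x^(m+1)) (Dh x) := by
    refine hasSum_congr' (hasSum_shift HD1 (by norm_num [d_one])) (fun m => ?_)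
    have hd := d_rec m
    have e2 : m+1+1 = m+2 := rfl
    rw [e2]
    push_cast
    linear_combination (x^(m+1)) * hd
  have Hxh : HasSum (fun (m:ℕ) => d m * x^(m+1)) (x * hfun x) := by
    refine hasSum_congr' ((hasSum_hfun hx).mul_left x) (fun m => ?_)
    ring
  have HxxD : HasSum (fun (m:ℕ) => (m:ℝ) * d m * x^(m+1)) (x^2 * Dh x) := by
    refine hasSum_unshift (hasSum_congr' (HD1.mul_left (x^2)) (fun m => ?_)) (by norm_num)
    push_cast
    ring
  have Hsum := Hxh.add HxxD
  have e : (fun (m:ℕ) => d m * x^(m+1) + (m:ℝ) * d m * x^(m+1))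
      = (fun (m:ℕ) => ((m:ℝ)+1) * d m * x^(m+1)) := by
    funext m; ring
  rw [e] at Hsum
  have huniq : Dh x = x * hfun x + x^2 * Dh x := HD2.unique Hsum
  linear_combination huniq

lemma const_of_deriv_zero_Ioo {f : ℝ → ℝ}
    (hf : ∀ y ∈ Set.Ioo (-1:ℝ) 1, HasDerivAt f 0 y) {x : ℝ} (hx : x ∈ Set.Ioo (-1:ℝ) 1) :
    f x = f 0 := by
  obtain ⟨hx1, hx2⟩ := hx
  rcases le_or_gt 0 x with h | h
  · have key := constant_of_has_deriv_right_zero (f := f) (a := 0) (b := x)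
      (fun y hy => by
        obtain ⟨hy1, hy2⟩ := hy
        exact (hf y ⟨by linarith, by linarith [hy2]⟩).continuousAt.continuousWithinAt)
      (fun y hy => by
        obtain ⟨hy1, hy2⟩ := hy
        exact (hf y ⟨by linarith, by linarith⟩).hasDerivWithinAt)
    exact key x ⟨h, le_refl x⟩
  · have key := constant_of_has_deriv_right_zero (f := f) (a := x) (b := 0)
      (fun y hy => by
        obtain ⟨hy1, hy2⟩ := hy
        exact (hf y ⟨by linarith, by linarith⟩).continuousAt.continuousWithinAt)
      (fun y hy => by
        obtain ⟨hy1, hy2⟩ := hy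
        exact (hf y ⟨by linarith, by linarith⟩).hasDerivWithinAt)
    exact (key 0 ⟨le_of_lt h, le_refl 0⟩).symm

lemma hfun_zero : hfun 0 = 1 := by
  have h : HasSum (fun m => d m * (0:ℝ)^m) (d 0 * (0:ℝ)^0) := by
    apply hasSum_single 0
    intro m hm
    rw [zero_pow hm, mul_zero]
  have := h.tsum_eq
  unfold hfun
  rw [this, d_zero]
  norm_num

lemma hfun_sq {x : ℝ} (hx : |x| < 1) : hfun x ^ 2 * (1 - x^2) = 1 := by
  have key : ∀ y ∈ Set.Ioo (-1:ℝ) 1, HasDerivAt (fun z => hfun z ^ 2 * (1 - z^2)) 0 y := by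
    intro y hy
    obtain ⟨hy1, hy2⟩ := hy
    have hay : |y| < 1 := abs_lt.mpr ⟨hy1, hy2⟩
    have h1 : HasDerivAt hfun (Dh y) y := hfun_hasDerivAt hay
    have h2 : HasDerivAt (fun z => hfun z ^ 2) (2 * hfun y * Dh y) y := by
      have := h1.mul h1
      have e : Dh y * hfun y + hfun y * Dh y = 2 * hfun y * Dh y := by ring
      rw [e] at this
      have efun : (fun z => hfun z * hfun z) = (fun z => hfun z ^ 2) := by
        funext z; ring
      rw [← efun]; exact this
    have h3 : HasDerivAt (fun z : ℝ => 1 - z^2) (-(2*y)) y := by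
      have := (hasDerivAt_pow 2 y).const_sub 1
      simpa using this
    have h4 := h2.mul h3
    have : 2 * hfun y * Dh y * (1 - y^2) + hfun y^2 * -(2*y) = 0 := by
      have hd := Dh_eq hay
      linear_combination (2 * hfun y) * hd
    rwa [this] at h4
  have hmem : x ∈ Set.Ioo (-1:ℝ) 1 := by
    obtain ⟨ha1, ha2⟩ := abs_lt.mp hx
    exact ⟨ha1, ha2⟩
  have hc := const_of_deriv_zero_Ioo key hmem
  rw [hc, hfun_zero]
  norm_num

lemma hfun_eq {x : ℝ} (hx : |x| < 1) : hfun x = 1 / Real.sqrt (1 - x^2) := by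
  have habs := abs_lt.mp hx
  have h1x : 0 < 1 - x^2 := by nlinarith
  have hs : 0 < Real.sqrt (1-x^2) := Real.sqrt_pos.mpr h1x
  have hsq : Real.sqrt (1-x^2)^2 = 1-x^2 := Real.sq_sqrt (le_of_lt h1x)
  have hH := hfun_sq hx
  have hpos : 0 < hfun x := lt_of_lt_of_le one_pos (one_le_hfun hx)
  rw [eq_div_iff (ne_of_gt hs)]
  have hu2 : (hfun x * Real.sqrt (1-x^2))^2 = 1 := by
    rw [mul_pow, hsq]
    linear_combination hH
  have hu0 : 0 ≤ hfun x * Real.sqrt (1-x^2) := le_of_lt (mul_pos hpos hs)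
  calc hfun x * Real.sqrt (1-x^2) = Real.sqrt ((hfun x * Real.sqrt (1-x^2))^2) :=
        (Real.sqrt_sq hu0).symm
    _ = Real.sqrt 1 := by rw [hu2]
    _ = 1 := Real.sqrt_one

end CMSE
end Part4
section Part5
namespace CMSE
open Real Filter MeasureTheory Finset Topology

variable {r : ℕ → ℝ → ℝ}

noncomputable def FF (r : ℕ → ℝ → ℝ) (a x : ℝ) : ℝ := ∑' n, pp r n a * x^n
noncomputable def DF (r : ℕ → ℝ → ℝ) (a x : ℝ) : ℝ := ∑' n, pp r n a * ((n:ℝ) * x^(n-1))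

lemma summable_pp_deriv (hr : Hrec r) {a x t₀ : ℝ} (ha : 0 ≤ a)
    (hx : |x| ≤ t₀) (ht0 : 0 < t₀) (ht1 : t₀ < 1) :
    Summable (fun n => pp r n a * ((n:ℝ) * x^(n-1))) := by
  apply Summable.of_norm_bounded (summable_qq_mul a t₀ ha ht0 ht1)
  intro n
  have hp := pp_nonneg hr n ha
  rw [Real.norm_eq_abs, abs_mul, abs_mul, abs_of_nonneg hp, Nat.abs_cast]
  have h1 : |x^(n-1)| ≤ t₀^(n-1) := by
    rw [abs_pow]
    exact pow_le_pow_left₀ (abs_nonneg _) hx _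
  have hm : (0:ℝ) ≤ (n:ℝ) := Nat.cast_nonneg n
  calc pp r n a * ((n:ℝ) * |x^(n-1)|) ≤ qq a n * ((n:ℝ) * |x^(n-1)|) :=
        mul_le_mul_of_nonneg_right (pp_le_qq hr ha n) (by positivity)
    _ ≤ qq a n * ((n:ℝ) * t₀^(n-1)) := by
        have h2 := mul_le_mul_of_nonneg_left h1 hm
        exact mul_le_mul_of_nonneg_left h2 (le_of_lt (qq_pos ha n))

lemma summable_norm_pp_pow (hr : Hrec r) {a x : ℝ} (ha : 0 ≤ a) (hx : |x| < 1) :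
    Summable (fun n => ‖pp r n a * x^n‖) := by
  refine (summable_pp_pow hr ha (abs_nonneg x) hx).congr (fun n => ?_)
  rw [Real.norm_eq_abs, abs_mul, abs_of_nonneg (pp_nonneg hr n ha), abs_pow]

lemma hasSum_FF (hr : Hrec r) {a x : ℝ} (ha : 0 ≤ a) (hx : |x| < 1) :
    HasSum (fun n => pp r n a * x^n) (FF r a x) :=
  (Summable.of_norm (summable_norm_pp_pow hr ha hx)).hasSum

lemma FF_hasDerivAt (hr : Hrec r) {a x : ℝ} (ha : 0 ≤ a) (hx : |x| < 1) :
    HasDerivAt (FF r a) (DF r a x) x :=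
  hasDerivAt_series (fun n => pp r n a) (fun n => pp_nonneg hr n ha)
    (t₀ := (|x|+1)/2) (by linarith)
    (summable_pp_deriv hr ha (x := (|x|+1)/2)
      (le_of_eq (abs_of_nonneg (le_of_lt half_pos'))) half_pos' (half_lt_one hx))

lemma DF_eq (hr : Hrec r) {a x : ℝ} (ha : 0 ≤ a) (hx : |x| < 1) :
    DF r a x = a * FF r a x * hfun x := by
  have HD : HasSum (fun n => pp r n a * ((n:ℝ) * x^(n-1))) (DF r a x) :=
    (summable_pp_deriv hr ha (le_half hx) half_pos' (half_lt_one hx)).hasSum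
  have HD1 : HasSum (fun (n:ℕ) => ((n:ℝ)+1) * pp r (n+1) a * x^n) (DF r a x) := by
    refine hasSum_congr' (hasSum_shift HD (by norm_num)) (fun n => ?_)
    push_cast [Nat.add_sub_cancel]
    ring
  have hC := tsum_mul_tsum_eq_tsum_sum_antidiagonal_of_summable_norm
    (f := fun n => d n * x^n) (g := fun n => pp r n a * x^n)
    (by
      apply Summable.of_nonneg_of_le (fun n => norm_nonneg _) (fun n => ?_)
        (summable_geometric_of_lt_one (abs_nonneg x) hx)
      rw [Real.norm_eq_abs, abs_mul, abs_of_nonneg (d_nonneg n), abs_pow]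
      nlinarith [d_le_one n, d_nonneg n, pow_nonneg (abs_nonneg x) n])
    (summable_norm_pp_pow hr ha hx)
  set A : ℕ → ℝ := fun n => ∑ kl ∈ Finset.HasAntidiagonal.antidiagonal n, (d kl.1 * x^kl.1) * (pp r kl.2 a * x^kl.2)
    with hAdef
  have hA : ∀ n, a * A n = ((n:ℝ)+1) * pp r (n+1) a * x^n := by
    intro n
    rw [hAdef]
    simp only
    rw [Finset.Nat.sum_antidiagonal_eq_sum_range_succ_mk]
    have e : ∀ k ∈ Finset.range (n+1), (d k * x^k) * (pp r (n-k) a * x^(n-k))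
        = (if k % 2 = 0 then pp r (n-k) a * ck (k/2) * x^n else 0) := by
      intro k hk
      rw [Finset.mem_range] at hk
      have hxk : x^k * x^(n-k) = x^n := by
        rw [← pow_add]
        congr 1
        omega
      unfold d
      split
      · linear_combination (ck (k/2) * pp r (n-k) a) * hxk
      · simp
    rw [Finset.sum_congr rfl e, sum_even (fun j => pp r (n-j) a * ck (j/2) * x^n) n]
    have e2 : ∀ k ∈ Finset.range (n/2+1), pp r (n-2*k) a * ck ((2*k)/2) * x^n
        = pp r (n-2*k) a * ck k * x^n := by
      intro k _
      have h22 : (2*k)/2 = k := by omega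
      rw [h22]
    rw [Finset.sum_congr rfl e2, ← Finset.sum_mul]
    linear_combination (-(x^n)) * (pp_rec hr n a)
  calc DF r a x = ∑' (n:ℕ), ((n:ℝ)+1) * pp r (n+1) a * x^n := HD1.tsum_eq.symm
    _ = ∑' (n:ℕ), a * A n := tsum_congr (fun n => (hA n).symm)
    _ = a * ∑' n, A n := tsum_mul_left
    _ = a * (hfun x * FF r a x) := by rw [← hC]; rfl
    _ = a * FF r a x * hfun x := by ring

lemma FF_zero (hr : Hrec r) (a : ℝ) : FF r a 0 = 1 := by
  have h : HasSum (fun n => pp r n a * (0:ℝ)^n) (pp r 0 a * (0:ℝ)^0) := by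
    apply hasSum_single 0
    intro n hn
    rw [zero_pow hn, mul_zero]
  unfold FF
  rw [h.tsum_eq, pp_zero hr]
  norm_num

lemma FF_eq_exp (hr : Hrec r) {a x : ℝ} (ha : 0 ≤ a) (hx : |x| < 1) :
    FF r a x = Real.exp (a * Real.arcsin x) := by
  set G : ℝ → ℝ := fun y => FF r a y * Real.exp (-(a * Real.arcsin y)) with hGdef
  have key : ∀ y ∈ Set.Ioo (-1:ℝ) 1, HasDerivAt G 0 y := by
    intro y hy
    obtain ⟨hy1, hy2⟩ := hy
    have hay : |y| < 1 := abs_lt.mpr ⟨hy1, hy2⟩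
    have hF := FF_hasDerivAt hr ha hay
    have harc : HasDerivAt Real.arcsin (1/Real.sqrt (1 - y^2)) y :=
      Real.hasDerivAt_arcsin (by linarith) (by linarith)
    have hE : HasDerivAt (fun z => Real.exp (-(a * Real.arcsin z)))
        (Real.exp (-(a * Real.arcsin y)) * (-(a * (1/Real.sqrt (1 - y^2))))) y :=
      ((harc.const_mul a).neg).exp
    have hG := hF.mul hE
    have hval : DF r a y * Real.exp (-(a * Real.arcsin y))
        + FF r a y * (Real.exp (-(a * Real.arcsin y)) * (-(a * (1/Real.sqrt (1 - y^2))))) = 0 := by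
      rw [DF_eq hr ha hay, hfun_eq hay]
      ring
    rwa [hval] at hG
  have hmem : x ∈ Set.Ioo (-1:ℝ) 1 := by
    obtain ⟨ha1, ha2⟩ := abs_lt.mp hx
    exact ⟨ha1, ha2⟩
  have hc := const_of_deriv_zero_Ioo key hmem
  have hG0 : G 0 = 1 := by
    rw [hGdef]
    simp only
    rw [FF_zero hr, Real.arcsin_zero]
    simp
  rw [hG0] at hc
  have hc' : FF r a x * Real.exp (-(a * Real.arcsin x)) = 1 := hc
  rw [Real.exp_neg] at hc'
  have hexp : Real.exp (a * Real.arcsin x) ≠ 0 := Real.exp_ne_zero _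
  field_simp at hc'
  exact hc'

end CMSE
end Part5
section Part6
namespace CMSE
open Real Filter MeasureTheory Finset Topology

lemma hasSum_one_of_nonneg {q : ℕ → ℝ} {L : ℝ} (hq : ∀ n, 0 ≤ q n)
    (hsum : ∀ t : ℝ, 0 ≤ t → t < 1 → Summable (fun n => q n * t^n))
    (hlim : Tendsto (fun t => ∑' n, q n * t^n) (𝓝[<] (1:ℝ)) (𝓝 L)) :
    HasSum q L := by
  have hIoo : Set.Ioo (0:ℝ) 1 ∈ 𝓝[<] (1:ℝ) :=
    Ioo_mem_nhdsLT_of_mem (by constructor <;> norm_num)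
  have hb : ∀ N, ∑ n ∈ Finset.range N, q n ≤ L := by
    intro N
    have hcont : Continuous fun t : ℝ => ∑ n ∈ Finset.range N, q n * t^n := by
      apply continuous_finset_sum
      intro n _
      exact continuous_const.mul (continuous_pow n)
    have h1 : Tendsto (fun t : ℝ => ∑ n ∈ Finset.range N, q n * t^n) (𝓝[<] (1:ℝ))
        (𝓝 (∑ n ∈ Finset.range N, q n)) := by
      have h2 := (hcont.tendsto 1).mono_left (nhdsWithin_le_nhds (s := Set.Iio (1:ℝ)))
      simpa using h2
    refine le_of_tendsto_of_tendsto h1 hlim ?_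
    filter_upwards [hIoo] with t ht
    refine Summable.sum_le_tsum (Finset.range N) (fun n _ => ?_) (hsum t ht.1.le ht.2)
    have := hq n
    have := ht.1.le
    positivity
  have hS : Summable q := summable_of_sum_range_le hq hb
  have hle : ∑' n, q n ≤ L := Real.tsum_le_of_sum_range_le hq hb
  have hge : L ≤ ∑' n, q n := by
    refine le_of_tendsto hlim ?_
    filter_upwards [hIoo] with t ht
    refine Summable.tsum_le_tsum (fun n => ?_) (hsum t ht.1.le ht.2) hS
    have h1 : t^n ≤ 1 := pow_le_one₀ ht.1.le ht.2.le
    nlinarith [hq n, pow_nonneg ht.1.le n]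
  have hLe : ∑' n, q n = L := le_antisymm hle hge
  exact hLe ▸ hS.hasSum

variable {r : ℕ → ℝ → ℝ}

lemma hasSum_pp_one (hr : Hrec r) {a : ℝ} (ha : 0 ≤ a) :
    HasSum (fun n => pp r n a) (Real.exp (a * (Real.pi/2))) := by
  apply hasSum_one_of_nonneg (fun n => pp_nonneg hr n ha)
    (fun t ht0 ht1 => summable_pp_pow hr ha ht0 ht1)
  have hcont : Tendsto (fun t : ℝ => Real.exp (a * Real.arcsin t)) (𝓝[<] (1:ℝ))
      (𝓝 (Real.exp (a * (Real.pi/2)))) := by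
    have h1 : Continuous fun t : ℝ => Real.exp (a * Real.arcsin t) :=
      Real.continuous_exp.comp (continuous_const.mul Real.continuous_arcsin)
    have h2 := (h1.tendsto 1).mono_left (nhdsWithin_le_nhds (s := Set.Iio (1:ℝ)))
    simpa [Real.arcsin_one] using h2
  refine hcont.congr' ?_
  have hIoo : Set.Ioo (0:ℝ) 1 ∈ 𝓝[<] (1:ℝ) :=
    Ioo_mem_nhdsLT_of_mem (by constructor <;> norm_num)
  filter_upwards [hIoo] with t ht
  have hat : |t| < 1 := by
    rw [abs_of_nonneg ht.1.le]
    exact ht.2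
  rw [← FF_eq_exp hr ha hat]
  rfl

lemma summable_pp_one (hr : Hrec r) {a : ℝ} (ha : 0 ≤ a) : Summable (fun n => pp r n a) :=
  (hasSum_pp_one hr ha).summable

lemma hasSum_pp_neg_one (hr : Hrec r) {a : ℝ} (ha : 0 ≤ a) :
    HasSum (fun n => pp r n a * (-1:ℝ)^n) (Real.exp (a * (-(Real.pi/2)))) := by
  have habs : Summable (fun n => ‖pp r n a * (-1:ℝ)^n‖) := by
    refine (summable_pp_one hr ha).congr (fun n => ?_)
    rw [Real.norm_eq_abs, abs_mul, abs_of_nonneg (pp_nonneg hr n ha), abs_pow, abs_neg, abs_one,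
      one_pow, mul_one]
  have hS : Summable (fun n => pp r n a * (-1:ℝ)^n) := Summable.of_norm habs
  set s := ∑' n, pp r n a * (-1:ℝ)^n with hsdef
  have habel := Real.tendsto_tsum_powerSeries_nhdsWithin_lt
    (f := fun n => pp r n a * (-1:ℝ)^n) (hS.hasSum.tendsto_sum_nat)
  have hcont : Tendsto (fun t : ℝ => Real.exp (a * Real.arcsin (-t))) (𝓝[<] (1:ℝ))
      (𝓝 (Real.exp (a * (-(Real.pi/2))))) := by
    have h1 : Continuous fun t : ℝ => Real.exp (a * Real.arcsin (-t)) :=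
      Real.continuous_exp.comp (continuous_const.mul (Real.continuous_arcsin.comp continuous_neg))
    have h2 := (h1.tendsto 1).mono_left (nhdsWithin_le_nhds (s := Set.Iio (1:ℝ)))
    simpa [Real.arcsin_neg, Real.arcsin_one] using h2
  have heq : Tendsto (fun t : ℝ => ∑' n, (pp r n a * (-1:ℝ)^n) * t^n) (𝓝[<] (1:ℝ))
      (𝓝 (Real.exp (a * (-(Real.pi/2))))) := by
    refine hcont.congr' ?_
    have hIoo : Set.Ioo (0:ℝ) 1 ∈ 𝓝[<] (1:ℝ) :=
      Ioo_mem_nhdsLT_of_mem (by constructor <;> norm_num)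
    filter_upwards [hIoo] with t ht
    have hat : |(-t)| < 1 := by
      rw [abs_neg, abs_of_nonneg ht.1.le]
      exact ht.2
    have h3 : ∑' n, (pp r n a * (-1:ℝ)^n) * t^n = FF r a (-t) := by
      apply tsum_congr
      intro n
      show pp r n a * (-1:ℝ)^n * t^n = pp r n a * (-t)^n
      rw [neg_pow]
      ring
    rw [FF_eq_exp hr ha hat] at h3
    exact h3.symm
  have hfinal : (∑' n, pp r n a * (-1:ℝ)^n) = Real.exp (a * (-(Real.pi/2))) :=
    tendsto_nhds_unique habel heq
  rw [← hfinal]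
  exact hS.hasSum

lemma hasSum_main (hr : Hrec r) {a x : ℝ} (ha : 0 ≤ a) (hx : x ∈ Set.Icc (-1:ℝ) 1) :
    HasSum (fun n => pp r n a * x^n) (Real.exp (a * Real.arcsin x)) := by
  obtain ⟨h1, h2⟩ := hx
  by_cases hx1 : x = 1
  · subst hx1
    rw [Real.arcsin_one]
    refine hasSum_congr' (hasSum_pp_one hr ha) (fun n => ?_)
    rw [one_pow, mul_one]
  by_cases hxm1 : x = -1
  · subst hxm1
    rw [Real.arcsin_neg, Real.arcsin_one]
    exact hasSum_pp_neg_one hr ha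
  · have hax : |x| < 1 := by
      rw [abs_lt]
      constructor
      · rcases lt_or_eq_of_le h1 with h | h
        · exact h
        · exact absurd h.symm hxm1
      · rcases lt_or_eq_of_le h2 with h | h
        · exact h
        · exact absurd h hx1
    rw [← FF_eq_exp hr ha hax]
    exact hasSum_FF hr ha hax

end CMSE
end Part6
section Part7
open Real Filter MeasureTheory Finset Topology CMSE

open scoped BigOperators

/-- Gneiting's theorem revisited: if `ρ(θ) = ∫ e^{−aθ} dμ(a)` for a probability
measure `μ` on `[0,∞)`, then `x ↦ ρ(arccos x)` on `[−1,1]` equals `∑ (cₙ/n!) xⁿ`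
with `cₙ = ∫ e^{−aπ/2} rₙ(a) dμ(a) ≥ 0` and `∑ cₙ/n! = ρ(0) < ∞`, where the `rₙ`
satisfy `r₀ = 1`, `r_{n+1}(a) = a·∑_{k≤⌊n/2⌋} binom(n,2k)·r_{n−2k}(a)·((2k−1)!!)²`. -/
theorem completely_monotonic_sphere_expansion
    (μ : MeasureTheory.Measure ℝ) [MeasureTheory.IsProbabilityMeasure μ]
    (hμ : μ (Set.Iio 0) = 0)
    (r : ℕ → ℝ → ℝ) (h0 : ∀ a : ℝ, r 0 a = 1)
    (hrec : ∀ (n : ℕ) (a : ℝ), r (n + 1) a = a *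
      ∑ k ∈ Finset.range (n / 2 + 1),
        (Nat.choose n (2 * k) : ℝ) * r (n - 2 * k) a *
          (((∏ i ∈ Finset.range k, (2 * i + 1) : ℕ)) : ℝ) ^ 2)
    (ρ : ℝ → ℝ) (hρ : ∀ θ : ℝ, ρ θ = ∫ a, Real.exp (-(a * θ)) ∂μ)
    (c : ℕ → ℝ) (hc : ∀ n : ℕ, c n = ∫ a, Real.exp (-(a * Real.pi / 2)) * r n a ∂μ) :
    (∀ n, 0 ≤ c n) ∧
    Summable (fun n : ℕ => c n / Nat.factorial n) ∧
    (∑' n : ℕ, c n / Nat.factorial n) = ρ 0 ∧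
    ∀ x ∈ Set.Icc (-1 : ℝ) 1,
      ρ (Real.arccos x) = ∑' n : ℕ, c n / Nat.factorial n * x ^ n := by
  have hr : Hrec r := ⟨h0, hrec⟩
  -- almost everywhere nonneg
  have hae : ∀ᵐ a ∂μ, (0:ℝ) ≤ a := by
    refine MeasureTheory.ae_iff.mpr ?_
    have hset : {a : ℝ | ¬ (0:ℝ) ≤ a} = Set.Iio 0 := by
      ext a
      simp [Set.mem_Iio, not_le]
    rw [hset]
    exact hμ
  -- measurability of the integrands
  have hgm : ∀ n : ℕ, Measurable (fun a : ℝ => Real.exp (-(a * Real.pi / 2)) * pp r n a) := by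
    intro n
    apply Measurable.mul
    · exact Real.measurable_exp.comp (((measurable_id.mul_const Real.pi).div_const 2).neg)
    · exact (r_measurable hr n).div_const _
  have hgnn : ∀ n : ℕ, ∀ a : ℝ, 0 ≤ a → 0 ≤ Real.exp (-(a * Real.pi / 2)) * pp r n a := by
    intro n a ha
    have h1 := pp_nonneg hr n ha
    positivity
  -- total mass identity
  have htot : (∑' n : ℕ, ∫⁻ a, ENNReal.ofReal (Real.exp (-(a * Real.pi / 2)) * pp r n a) ∂μ) = 1 := by
    rw [← MeasureTheory.lintegral_tsum (fun n => ((hgm n).ennreal_ofReal).aemeasurable)]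
    have hone : ∀ᵐ a ∂μ, (∑' n : ℕ, ENNReal.ofReal (Real.exp (-(a * Real.pi / 2)) * pp r n a))
        = 1 := by
      filter_upwards [hae] with a ha
      have h1 : HasSum (fun n => Real.exp (-(a * Real.pi / 2)) * pp r n a)
          (Real.exp (-(a * Real.pi / 2)) * Real.exp (a * (Real.pi/2))) :=
        (hasSum_pp_one hr ha).mul_left _
      rw [← ENNReal.ofReal_tsum_of_nonneg (fun n => hgnn n a ha) h1.summable]
      rw [h1.tsum_eq, ← Real.exp_add]
      have hz : -(a * Real.pi / 2) + a * (Real.pi/2) = 0 := by ring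
      rw [hz, Real.exp_zero, ENNReal.ofReal_one]
    rw [MeasureTheory.lintegral_congr_ae hone]
    simp
  -- lintegral bound for each x in [-1,1]
  have hbound : ∀ x : ℝ, x ∈ Set.Icc (-1:ℝ) 1 →
      (∑' n : ℕ, ∫⁻ a, ‖(Real.exp (-(a * Real.pi / 2)) * pp r n a) * x^n‖₊ ∂μ) ≤ 1 := by
    intro x hx
    have hxabs : |x| ≤ 1 := abs_le.mpr hx
    calc (∑' n : ℕ, ∫⁻ a, ‖(Real.exp (-(a * Real.pi / 2)) * pp r n a) * x^n‖₊ ∂μ)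
        ≤ ∑' n : ℕ, ∫⁻ a, ENNReal.ofReal (Real.exp (-(a * Real.pi / 2)) * pp r n a) ∂μ := by
          refine ENNReal.tsum_le_tsum (fun n => MeasureTheory.lintegral_mono_ae ?_)
          filter_upwards [hae] with a ha
          rw [← enorm_eq_nnnorm, Real.enorm_eq_ofReal_abs]
          apply ENNReal.ofReal_le_ofReal
          rw [abs_mul, abs_of_nonneg (hgnn n a ha), abs_pow]
          have h2 : |x|^n ≤ 1 := pow_le_one₀ (abs_nonneg x) hxabs
          nlinarith [hgnn n a ha, pow_nonneg (abs_nonneg x) n]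
      _ = 1 := htot
  -- the integral of each term
  have hcn : ∀ n : ℕ, (∫ a, Real.exp (-(a * Real.pi / 2)) * pp r n a ∂μ)
      = c n / (Nat.factorial n : ℝ) := by
    intro n
    rw [hc n, ← MeasureTheory.integral_div]
    apply MeasureTheory.integral_congr_ae
    filter_upwards with a
    unfold pp
    ring
  -- part 1
  have part1 : ∀ n, 0 ≤ c n := by
    intro n
    rw [hc n]
    apply MeasureTheory.integral_nonneg_of_ae
    filter_upwards [hae] with a ha
    have := r_nonneg hr n a ha
    positivity
  -- part 2
  have part2 : Summable (fun n : ℕ => c n / (Nat.factorial n : ℝ)) := by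
    have heq : ∀ n : ℕ, c n / (Nat.factorial n : ℝ)
        = (∫⁻ a, ENNReal.ofReal (Real.exp (-(a * Real.pi / 2)) * pp r n a) ∂μ).toReal := by
      intro n
      rw [← hcn n]
      exact MeasureTheory.integral_eq_lintegral_of_nonneg_ae
        (by filter_upwards [hae] with a ha using hgnn n a ha)
        (hgm n).aestronglyMeasurable
    refine Summable.congr ?_ (fun n => (heq n).symm)
    exact ENNReal.summable_toReal (htot ▸ ENNReal.one_ne_top)
  -- part 4
  have part4 : ∀ x ∈ Set.Icc (-1:ℝ) 1,
      ρ (Real.arccos x) = ∑' n : ℕ, c n / (Nat.factorial n : ℝ) * x ^ n := by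
    intro x hx
    rw [hρ]
    have hpt : ∀ᵐ a ∂μ, Real.exp (-(a * Real.arccos x))
        = ∑' n : ℕ, (Real.exp (-(a * Real.pi / 2)) * pp r n a) * x^n := by
      filter_upwards [hae] with a ha
      have h1 : HasSum (fun n => Real.exp (-(a * Real.pi / 2)) * (pp r n a * x^n))
          (Real.exp (-(a * Real.pi / 2)) * Real.exp (a * Real.arcsin x)) :=
        (hasSum_main hr ha hx).mul_left _
      have h2 : Real.exp (-(a * Real.pi / 2)) * Real.exp (a * Real.arcsin x)
          = Real.exp (-(a * Real.arccos x)) := by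
        rw [← Real.exp_add]
        congr 1
        rw [Real.arccos_eq_pi_div_two_sub_arcsin]
        ring
      rw [h2] at h1
      rw [← h1.tsum_eq]
      apply tsum_congr
      intro n
      ring
    rw [MeasureTheory.integral_congr_ae hpt]
    rw [MeasureTheory.integral_tsum
      (fun n => ((hgm n).mul_const (x^n)).aestronglyMeasurable)
      (by
        have := hbound x hx
        exact ne_top_of_le_ne_top ENNReal.one_ne_top this)]
    apply tsum_congr
    intro n
    rw [MeasureTheory.integral_mul_const, hcn n]
  refine ⟨part1, part2, ?_, part4⟩
  have h41 := part4 1 (by constructor <;> norm_num)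
  rw [Real.arccos_one] at h41
  rw [h41]
  apply tsum_congr
  intro n
  rw [one_pow, mul_one]

end Part7
end
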